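/- arXiv:1211.4274 — 8 statements merged into one kernel-verified Lean document; each statement's English description precedes it below -/
import Mathlib

section
/- Let 0 < τ < 1, M > 0, r ≥ 1, and let R : ℕ → ℂ be a sequence of complex numbers such that for every real t ≥ r the set {j : |R_j| ≤ t} is finite with cardinality at most M·t^{1−τ}. Then the sum of 1/|R_j| over all indices j with |R_j| > r is at most (M/τ)·r^{−τ} (in particular the family (1/|R_j|)_{j : |R_j| > r} is summable). -/
open Finset Real

/-- Bernoulli-type inequality for negative exponents, via weighted AM-GM. -/
lemma aux_key {p : ℝ} (hp : 1 < p) {a b : ℝ} (ha : 0 < a) (hb : 0 < b) :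
    (p - 1) * a ^ (-p) * (a - b) ≤ b ^ (1 - p) - a ^ (1 - p) := by
  have hp0 : 0 < p := lt_trans one_pos hp
  have hu : 0 < b / a := div_pos hb ha
  have hgm := Real.geom_mean_le_arith_mean2_weighted
    (w₁ := 1/p) (w₂ := (p-1)/p) (p₁ := (b/a) ^ (1-p)) (p₂ := b/a)
    (by positivity) (div_nonneg (by linarith) hp0.le) (Real.rpow_nonneg hu.le _) hu.le
    (by field_simp; ring)
  have hone : ((b/a) ^ (1-p)) ^ (1/p) * (b/a) ^ ((p-1)/p) = 1 := by
    rw [← Real.rpow_mul hu.le, ← Real.rpow_add hu]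
    rw [show (1-p) * (1/p) + (p-1)/p = 0 by field_simp; ring, Real.rpow_zero]
  rw [hone] at hgm
  have ha1p : 0 < a ^ (1-p) := Real.rpow_pos_of_pos ha _
  have e1 : (b/a) ^ (1-p) * a ^ (1-p) = b ^ (1-p) := by
    rw [Real.div_rpow hb.le ha.le, div_mul_cancel₀ _ ha1p.ne']
  have e2 : a ^ (1-p) = a * a ^ (-p) := by
    rw [show (1:ℝ) - p = 1 + -p by ring, Real.rpow_add ha, Real.rpow_one]
  have hmul := mul_le_mul_of_nonneg_left hgm (mul_pos hp0 ha1p).le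
  rw [mul_one, mul_add] at hmul
  have hx1 : p * a ^ (1-p) * (1/p * (b/a) ^ (1-p)) = b ^ (1-p) := by
    rw [← e1]; field_simp
  have hx2 : p * a ^ (1-p) * ((p-1)/p * (b/a)) = (p-1) * b * a ^ (-p) := by
    have h4 := Real.rpow_sub ha (1-p) 1
    rw [Real.rpow_one, show ((1:ℝ)-p)-1 = -p by ring] at h4
    rw [h4]; field_simp
  rw [hx1, hx2] at hmul
  rw [e2]
  nlinarith [hmul]

/-- If the zero-counting function of the sequence `R : ℕ → ℂ` satisfies
`ν(t) ≤ M t^(1-τ)` for all `t ≥ r` (with `0 < τ < 1`, `M > 0`, `r ≥ 1`), then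
the family `(1/|R_j|)` over indices with `|R_j| > r` is summable and its sum is
at most `(M/τ) r^(-τ)`. -/
theorem stmt_4 (τ M r : ℝ) (hτ0 : 0 < τ) (hτ1 : τ < 1) (hM : 0 < M) (hr : 1 ≤ r)
    (R : ℕ → ℂ)
    (hcount : ∀ t : ℝ, r ≤ t →
      ({j : ℕ | ‖R j‖ ≤ t}).Finite ∧
        (({j : ℕ | ‖R j‖ ≤ t}).ncard : ℝ) ≤ M * t ^ (1 - τ)) :
    Summable (fun j : {j : ℕ // r < ‖R j‖} => 1 / ‖R j.1‖) ∧
      ∑' j : {j : ℕ // r < ‖R j‖}, 1 / ‖R j.1‖ ≤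
        (M / τ) * r ^ (-τ) := by
  have h1τ : 0 < 1 - τ := by linarith
  have h1τ' : (1:ℝ) - τ ≠ 0 := h1τ.ne'
  set p : ℝ := (1 - τ)⁻¹ with hpdef
  have hpτ : (1 - τ) * p = 1 := mul_inv_cancel₀ h1τ.ne'
  have hp0 : 0 < p := inv_pos.2 h1τ
  have hp1 : 1 < p := by nlinarith
  have hpne : p - 1 ≠ 0 := ne_of_gt (by linarith)
  have hr0 : 0 < r := lt_of_lt_of_le one_pos hr
  have hMp : 0 < M ^ p := Real.rpow_pos_of_pos hM _
  set g : ℕ → ℝ := fun k => min (1/r) (M ^ p * (k:ℝ) ^ (-p)) with hgdef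
  set K : ℝ := M * r ^ (1 - τ) with hKdef
  have hK0 : 0 < K := mul_pos hM (Real.rpow_pos_of_pos hr0 _)
  set m : ℕ := ⌊K⌋₊ with hmdef
  have hmK : (m:ℝ) ≤ K := Nat.floor_le hK0.le
  have hKm : K < (m:ℝ) + 1 := Nat.lt_floor_add_one K
  set c : ℝ := M ^ p / (p - 1) with hcdef
  have hc0 : 0 < c := div_pos hMp (by linarith)
  have hKp : K ^ p = M ^ p * r := by
    rw [hKdef, Real.mul_rpow hM.le (Real.rpow_nonneg hr0.le _),
      ← Real.rpow_mul hr0.le, hpτ, Real.rpow_one]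
  have hrK : 1/r = M ^ p * K ^ (-p) := by
    rw [Real.rpow_neg hK0.le, hKp]
    field_simp
  clear_value p K m c
  set φ : ℕ → ℝ := fun k => if k ≤ m then (K - k)/r + c * K ^ (1-p)
      else c * (k:ℝ) ^ (1-p) with hφdef
  have step : ∀ k : ℕ, g (k+1) ≤ φ k - φ (k+1) := by
    intro k
    by_cases hk1 : k + 1 ≤ m
    · have hk : k ≤ m := le_trans (Nat.le_succ k) hk1
      simp only [hφdef, hgdef, if_pos hk, if_pos hk1]
      have hml := min_le_left (1/r) (M ^ p * ((k+1 : ℕ):ℝ) ^ (-p))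
      push_cast
      push_cast at hml
      have harith : (K - (k:ℝ))/r - (K - ((k:ℝ)+1))/r = 1/r := by ring
      linarith [hml, harith]
    · by_cases hk : k ≤ m
      · -- crossover: k = m
        have hkm : k = m := by omega
        simp only [hφdef, hgdef, if_pos hk, if_neg hk1]
        have hml := min_le_right (1/r) (M ^ p * ((k+1 : ℕ):ℝ) ^ (-p))
        have hk1pos : (0:ℝ) < (k:ℝ) + 1 := by positivity
        have hkK : (k:ℝ) ≤ K := by rw [hkm]; exact hmK
        have hKk1 : K ≤ (k:ℝ) + 1 := by rw [hkm]; exact hKm.le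
        have hber := aux_key hp1 hk1pos hK0
        have hmono : ((k:ℝ)+1) ^ (-p) ≤ K ^ (-p) :=
          Real.rpow_le_rpow_of_nonpos hK0 hKk1 (by linarith)
        have h1 : M ^ p * ((k:ℝ)+1) ^ (-p) * (K - (k:ℝ)) ≤ (K - (k:ℝ))/r := by
          have hd : (K - (k:ℝ))/r = (K - (k:ℝ)) * (M ^ p * K ^ (-p)) := by
            rw [← hrK]; ring
          rw [hd]
          nlinarith [mul_nonneg (mul_nonneg hMp.le (sub_nonneg.2 hmono))
            (sub_nonneg.2 hkK)]
        have h2 : M ^ p * ((k:ℝ)+1) ^ (-p) * (((k:ℝ)+1) - K) ≤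
            c * (K ^ (1-p) - ((k:ℝ)+1) ^ (1-p)) := by
          have hmm := mul_le_mul_of_nonneg_left hber hc0.le
          have he : c * ((p-1) * ((k:ℝ)+1) ^ (-p) * (((k:ℝ)+1) - K)) =
              M ^ p * ((k:ℝ)+1) ^ (-p) * (((k:ℝ)+1) - K) := by
            rw [hcdef]; field_simp
          rw [he] at hmm
          exact hmm
        push_cast
        push_cast at hml
        linarith [hml, h1, h2]
      · -- k > m
        have hk1' : ¬ (k + 1 ≤ m) := hk1
        simp only [hφdef, hgdef, if_neg hk, if_neg hk1']
        have hml := min_le_right (1/r) (M ^ p * ((k+1 : ℕ):ℝ) ^ (-p))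
        have hkpos : (0:ℝ) < (k:ℝ) := by
          have : 1 ≤ k := by omega
          exact_mod_cast this
        have hk1pos : (0:ℝ) < (k:ℝ) + 1 := by positivity
        have hber := aux_key hp1 hk1pos hkpos
        have h2 : M ^ p * ((k:ℝ)+1) ^ (-p) ≤
            c * ((k:ℝ) ^ (1-p) - ((k:ℝ)+1) ^ (1-p)) := by
          have hmm := mul_le_mul_of_nonneg_left hber hc0.le
          have he : c * ((p-1) * ((k:ℝ)+1) ^ (-p) * (((k:ℝ)+1) - (k:ℝ))) =
              M ^ p * ((k:ℝ)+1) ^ (-p) := by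
            rw [hcdef]; field_simp; ring
          rw [he] at hmm
          exact hmm
        push_cast
        push_cast at hml
        linarith [hml, h2]
  have φnonneg : ∀ n : ℕ, 0 ≤ φ n := by
    intro n
    by_cases hn : n ≤ m
    · simp only [hφdef, if_pos hn]
      have : (n:ℝ) ≤ K := le_trans (by exact_mod_cast hn) hmK
      have h1 : 0 ≤ (K - n)/r := div_nonneg (by linarith) hr0.le
      have h2 : 0 ≤ c * K ^ (1-p) := mul_nonneg hc0.le (Real.rpow_nonneg hK0.le _)
      linarith
    · simp only [hφdef, if_neg hn]
      exact mul_nonneg hc0.le (Real.rpow_nonneg (Nat.cast_nonneg n) _)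
  have tele : ∀ n : ℕ, ∑ k ∈ Finset.range n, g (k+1) ≤ φ 0 - φ n := by
    intro n
    induction n with
    | zero => simp
    | succ n ih =>
      rw [Finset.sum_range_succ]
      have := step n
      linarith
  have hφ0 : φ 0 = K/r + c * K ^ (1-p) := by
    simp only [hφdef, if_pos (Nat.zero_le m)]
    norm_num
  have target_eq : K/r + c * K ^ (1-p) = (M/τ) * r ^ (-τ) := by
    have e1 : K/r = M * r ^ (-τ) := by
      rw [hKdef, mul_div_assoc, div_eq_mul_inv, ← Real.rpow_neg_one r,
        ← Real.rpow_add hr0]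
      congr 2
      ring
    have e2 : K ^ (1-p) = M ^ (1-p) * r ^ (-τ) := by
      rw [hKdef, Real.mul_rpow hM.le (Real.rpow_nonneg hr0.le _),
        ← Real.rpow_mul hr0.le]
      congr 2
      rw [show (1 - τ) * (1 - p) = (1 - τ) - (1-τ)*p by ring, hpτ]
      ring
    have e3 : M ^ p * M ^ (1-p) = M := by
      rw [← Real.rpow_add hM]
      norm_num
    have e4 : p - 1 = τ * p := by
      rw [hpdef]; field_simp; ring
    have e5 : (τ*p)⁻¹ = (1-τ)/τ := by
      rw [hpdef]; field_simp
    rw [e1, e2, hcdef, e4]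
    calc M * r ^ (-τ) + M ^ p / (τ*p) * (M ^ (1-p) * r ^ (-τ))
        = M * r ^ (-τ) + (M ^ p * M ^ (1-p)) * r ^ (-τ) * (τ*p)⁻¹ := by ring
      _ = M * r ^ (-τ) + M * r ^ (-τ) * ((1-τ)/τ) := by rw [e3, e5]
      _ = (M/τ) * r ^ (-τ) := by field_simp; ring
  have lemA : ∀ n : ℕ, ∑ k ∈ Finset.range n, g (k+1) ≤ (M/τ) * r ^ (-τ) := by
    intro n
    have h1 := tele n
    rw [hφ0] at h1
    linarith [φnonneg n, target_eq.le, target_eq.ge]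
  have lemB : ∀ (n : ℕ) (s : Finset ℕ), s.card = n →
      (∀ j ∈ s, r < ‖R j‖) →
      ∑ j ∈ s, 1 / ‖R j‖ ≤ ∑ k ∈ Finset.range n, g (k+1) := by
    intro n
    induction n with
    | zero => intro s hs _; rw [Finset.card_eq_zero.mp hs]; simp
    | succ n ih =>
      intro s hsc hmem
      have hne : s.Nonempty := Finset.card_pos.mp (by omega)
      obtain ⟨j, hj, hjmax⟩ := s.exists_max_image (fun i => ‖R i‖) hne
      have har : r < ‖R j‖ := hmem j hj
      have ha0 : 0 < ‖R j‖ := lt_trans hr0 har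
      obtain ⟨hfin, hcard⟩ := hcount (‖R j‖) har.le
      have hsub : (↑s : Set ℕ) ⊆ {i | ‖R i‖ ≤ ‖R j‖} :=
        fun i hi => hjmax i hi
      have h1 : ((n:ℝ) + 1) ≤ M * (‖R j‖) ^ (1-τ) := by
        have hle : s.card ≤ ({i : ℕ | ‖R i‖ ≤ ‖R j‖}).ncard := by
          rw [← Set.ncard_coe_finset]
          exact Set.ncard_le_ncard hsub hfin
        rw [hsc] at hle
        calc ((n:ℝ) + 1) ≤ (({i : ℕ | ‖R i‖ ≤ ‖R j‖}).ncard : ℝ) := by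
              exact_mod_cast hle
          _ ≤ _ := hcard
      have h2 : ((n:ℝ) + 1) ^ p ≤ M ^ p * ‖R j‖ := by
        calc ((n:ℝ) + 1) ^ p ≤ (M * (‖R j‖) ^ (1-τ)) ^ p :=
              Real.rpow_le_rpow (by positivity) h1 hp0.le
          _ = M ^ p * ‖R j‖ := by
              rw [Real.mul_rpow hM.le (Real.rpow_nonneg ha0.le _),
                ← Real.rpow_mul ha0.le, hpτ, Real.rpow_one]
      have h3 : 1 / ‖R j‖ ≤ g (n+1) := by
        simp only [hgdef]
        apply le_min
        · exact one_div_le_one_div_of_le hr0 har.le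
        · have hnp : (0:ℝ) < ((n+1:ℕ):ℝ) ^ p := Real.rpow_pos_of_pos (by positivity) _
          rw [Real.rpow_neg (by positivity), ← div_eq_mul_inv,
            div_le_div_iff₀ ha0 hnp, one_mul]
          push_cast
          push_cast at h2
          linarith [h2]
      calc ∑ i ∈ s, 1 / ‖R i‖
          = ∑ i ∈ s.erase j, 1 / ‖R i‖ + 1 / ‖R j‖ :=
            (Finset.sum_erase_add s _ hj).symm
        _ ≤ ∑ k ∈ Finset.range n, g (k+1) + g (n+1) := by
            apply add_le_add _ h3
            apply ih
            · rw [Finset.card_erase_of_mem hj, hsc]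
              omega
            · exact fun i hi => hmem i (Finset.mem_of_mem_erase hi)
        _ = ∑ k ∈ Finset.range (n+1), g (k+1) := (Finset.sum_range_succ _ _).symm
  have hbound : ∀ u : Finset {j : ℕ // r < ‖R j‖},
      ∑ x ∈ u, 1 / ‖R x.1‖ ≤ (M/τ) * r ^ (-τ) := by
    intro u
    have hinj : ∀ x ∈ u, ∀ y ∈ u, (x : ℕ) = (y : ℕ) → x = y :=
      fun x _ y _ h => Subtype.ext h
    have himg : ∑ i ∈ u.image Subtype.val, 1 / ‖R i‖ =
        ∑ x ∈ u, 1 / ‖R x.1‖ := Finset.sum_image hinj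
    rw [← himg]
    calc ∑ i ∈ u.image Subtype.val, 1 / ‖R i‖
        ≤ ∑ k ∈ Finset.range (u.image Subtype.val).card, g (k+1) := by
          apply lemB _ _ rfl
          intro i hi
          obtain ⟨x, _, rfl⟩ := Finset.mem_image.mp hi
          exact x.2
      _ ≤ (M/τ) * r ^ (-τ) := lemA _
  have hnn : 0 ≤ fun j : {j : ℕ // r < ‖R j‖} => 1 / ‖R j.1‖ :=
    fun j => by positivity
  have hsum := summable_of_sum_le hnn hbound
  exact ⟨hsum, Summable.tsum_le_of_sum_le hsum hbound⟩
end

section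
/- For every η > 0 there exists a constant M > 0 such that for every real number w ≥ 1: ∑_{n=0}^∞ w^n · e^{−η·n·log n} ≤ M · exp((η/2)·w^{1/η}). -/
lemma exp34_ge_two : (2:ℝ) ≤ Real.exp (3/4) := by
  have h1 : (2.7182818283 : ℝ) < Real.exp 1 := Real.exp_one_gt_d9
  have h4 : Real.exp (3/4) ^ 4 = Real.exp 3 := by
    rw [← Real.exp_nat_mul]; norm_num
  have h3 : Real.exp 3 = Real.exp 1 ^ 3 := by
    rw [← Real.exp_nat_mul]; norm_num
  have he : (2.7:ℝ) ≤ Real.exp 1 := by linarith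
  have hc : (2.7:ℝ)^3 ≤ Real.exp 1 ^ 3 := by
    exact pow_le_pow_left₀ (by norm_num) he 3
  have hb : (2:ℝ)^4 ≤ Real.exp (3/4)^4 := by
    rw [h4, h3]; nlinarith [hc]
  exact le_of_pow_le_pow_left₀ (by norm_num) (Real.exp_pos _).le hb

lemma key_ineq (s x : ℝ) (hx : 1 ≤ x) :
    x*s - x*Real.log x + x/4 ≤ (1/2) * Real.exp s := by
  have hx0 : (0:ℝ) < x := lt_of_lt_of_le one_pos hx
  have h1 : s - Real.log x - 3/4 + 1 ≤ Real.exp (s - Real.log x - 3/4) :=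
    Real.add_one_le_exp _
  have h2 : x * Real.exp (s - Real.log x - 3/4) = Real.exp (s - 3/4) := by
    rw [show s - Real.log x - 3/4 = (s - 3/4) - Real.log x by ring,
      Real.exp_sub, Real.exp_log hx0]
    field_simp
  have h3 : Real.exp (s - 3/4) ≤ (1/2) * Real.exp s := by
    rw [Real.exp_sub, div_le_iff₀ (Real.exp_pos _)]
    nlinarith [exp34_ge_two, Real.exp_pos s]
  have h4 : x * (s - Real.log x - 3/4 + 1) ≤ x * Real.exp (s - Real.log x - 3/4) :=
    mul_le_mul_of_nonneg_left h1 hx0.le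
  rw [h2] at h4
  nlinarith [h4, h3]

/-- For every `η > 0` there is `M > 0` such that for every real `w ≥ 1`:
`∑_{n=0}^∞ w^n e^(-η n log n) ≤ M exp((η/2) w^(1/η))`. -/
theorem stmt_6 (η : ℝ) (hη : 0 < η) :
    ∃ M : ℝ, 0 < M ∧ ∀ w : ℝ, 1 ≤ w →
      (∑' n : ℕ, w ^ n * Real.exp (-η * n * Real.log n)) ≤
        M * Real.exp ((η / 2) * w ^ (1 / η)) := by
  set r := Real.exp (-(η/4)) with hr_def
  have hr0 : 0 < r := Real.exp_pos _
  have hr1 : r < 1 := Real.exp_lt_one_iff.mpr (by linarith)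
  refine ⟨(1 - r)⁻¹, inv_pos.mpr (by linarith), ?_⟩
  intro w hw
  have hw0 : (0:ℝ) < w := lt_of_lt_of_le one_pos hw
  set C := Real.exp ((η / 2) * w ^ (1 / η)) with hC_def
  have hC1 : (1:ℝ) ≤ C := by
    apply Real.one_le_exp
    have : (1:ℝ) ≤ w ^ (1/η) := Real.one_le_rpow hw (by positivity)
    nlinarith
  have hterm : ∀ n : ℕ, w ^ n * Real.exp (-η * n * Real.log n) ≤ C * r ^ n := by
    intro n
    rcases Nat.eq_zero_or_pos n with h0 | h1
    · subst h0; simp; linarith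
    · have hn1 : (1:ℝ) ≤ (n:ℝ) := by exact_mod_cast h1
      have hkey := key_ineq (Real.log w / η) (n:ℝ) hn1
      have hηne : η ≠ 0 := hη.ne'
      have hkey2 : (n:ℝ) * Real.log w - η * n * Real.log n + η * n / 4
          ≤ (η/2) * Real.exp (Real.log w / η) := by
        have h := mul_le_mul_of_nonneg_left hkey hη.le
        have hx : η * ((n:ℝ) * (Real.log w / η)) = (n:ℝ) * Real.log w := by
          field_simp
        nlinarith [h, hx]
      have hrpow : w ^ (1/η) = Real.exp (Real.log w / η) := by
        rw [Real.rpow_def_of_pos hw0]; ring_nf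
      have hwn : w ^ n = Real.exp ((n:ℝ) * Real.log w) := by
        rw [Real.exp_nat_mul, Real.exp_log hw0]
      calc w ^ n * Real.exp (-η * n * Real.log n)
          = Real.exp ((n:ℝ) * Real.log w + (-η * n * Real.log n)) := by
            rw [hwn, ← Real.exp_add]
        _ ≤ Real.exp ((η/2) * w ^ (1/η) + (n:ℝ) * (-(η/4))) := by
            apply Real.exp_le_exp.mpr
            rw [hrpow]
            nlinarith [hkey2]
        _ = C * r ^ n := by
            rw [Real.exp_add, Real.exp_nat_mul]
  have hsum_g : Summable (fun n : ℕ => C * r ^ n) :=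
    (summable_geometric_of_lt_one hr0.le hr1).mul_left C
  have hsum_f : Summable (fun n : ℕ => w ^ n * Real.exp (-η * n * Real.log n)) :=
    Summable.of_nonneg_of_le (fun n => by positivity) hterm hsum_g
  calc (∑' n : ℕ, w ^ n * Real.exp (-η * n * Real.log n))
      ≤ ∑' n : ℕ, C * r ^ n := Summable.tsum_le_tsum hterm hsum_f hsum_g
    _ = C * (1 - r)⁻¹ := by
        rw [tsum_mul_left, tsum_geometric_of_lt_one hr0.le hr1]
    _ = (1 - r)⁻¹ * C := mul_comm _ _
end

section
/- Let c > 0 and define F : [1,∞) → ℝ by F(r) = ∑_{n=0}^∞ e^{−c·n·log n}·r^n (the series converges for every r). Then (log log F(r))/(log r) tends to 1/c as r → ∞; i.e., the entire function with Taylor coefficients e^{−c·n·log n} has growth order exactly 1/c. -/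
set_option maxHeartbeats 400000

open Real Filter

private lemma term_eq7 (c : ℝ) {r : ℝ} (hr0 : 0 < r) (n : ℕ) :
    Real.exp (-c * n * Real.log n) * r ^ n
      = Real.exp ((n : ℝ) * Real.log r - c * n * Real.log n) := by
  rw [show r ^ n = Real.exp ((n : ℝ) * Real.log r) by
        rw [Real.exp_nat_mul, Real.exp_log hr0], ← Real.exp_add]
  congr 1; ring

private lemma exp_neg_lt_one7 {c : ℝ} (hc : 0 < c) : Real.exp (-c) < 1 := by
  calc Real.exp (-c) < Real.exp 0 := Real.exp_lt_exp.mpr (by linarith)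
  _ = 1 := Real.exp_zero

private lemma summable7 (c : ℝ) (hc : 0 < c) {r : ℝ} (hr : 1 ≤ r) :
    Summable (fun n : ℕ => Real.exp (-c * n * Real.log n) * r ^ n) := by
  have hr0 : (0:ℝ) < r := lt_of_lt_of_le one_pos hr
  have hgeo : Summable (fun n : ℕ => Real.exp (-c) ^ n) :=
    summable_geometric_of_lt_one (Real.exp_pos _).le (exp_neg_lt_one7 hc)
  refine summable_of_isBigO_nat hgeo ?_
  rw [Asymptotics.isBigO_iff]
  refine ⟨1, ?_⟩
  have htend : Tendsto (fun n : ℕ => (n:ℝ)) atTop atTop := tendsto_natCast_atTop_atTop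
  filter_upwards [htend.eventually_ge_atTop (Real.exp ((Real.log r + c)/c))] with n hn
  rw [term_eq7 c hr0]
  have hlogn : (Real.log r + c)/c ≤ Real.log n := by
    calc (Real.log r + c)/c = Real.log (Real.exp ((Real.log r + c)/c)) := (Real.log_exp _).symm
    _ ≤ Real.log n := Real.log_le_log (Real.exp_pos _) hn
  have hn0 : (0:ℝ) ≤ n := n.cast_nonneg
  have h1 : Real.log r + c ≤ c * Real.log n := by
    rw [div_le_iff₀ hc] at hlogn; linarith
  have key : Real.exp ((n:ℝ) * Real.log r - c * n * Real.log n) ≤ Real.exp (-c) ^ n := by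
    rw [← Real.exp_nat_mul]
    exact Real.exp_le_exp.mpr (by nlinarith)
  simpa [Real.norm_eq_abs, abs_of_pos (Real.exp_pos _),
    abs_of_pos (pow_pos (Real.exp_pos _) _)] using key

private lemma log_tsum_lower7 (c : ℝ) (hc : 0 < c) {r : ℝ} (hr : 1 ≤ r)
    (hp2 : Real.exp 2 ≤ r ^ (1/c)) :
    c * (2 - Real.log 2) / Real.exp 2 * r ^ (1/c)
      ≤ Real.log (∑' n : ℕ, Real.exp (-c * n * Real.log n) * r ^ n) := by
  have hr0 : (0:ℝ) < r := lt_of_lt_of_le one_pos hr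
  have hs := summable7 c hc hr
  set p : ℝ := r ^ (1/c) with hp
  have hp0 : 0 < p := Real.rpow_pos_of_pos hr0 _
  set x : ℝ := p / Real.exp 2 with hx
  have hx1 : 1 ≤ x := (one_le_div (Real.exp_pos 2)).mpr hp2
  have hx0 : 0 < x := lt_of_lt_of_le one_pos hx1
  set n : ℕ := ⌈x⌉₊ with hn
  have hxn : x ≤ (n:ℝ) := Nat.le_ceil x
  have hn2x : (n:ℝ) ≤ 2 * x := by
    have := Nat.ceil_lt_add_one hx0.le
    linarith
  have hnpos : (0:ℝ) < n := lt_of_lt_of_le hx0 hxn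
  have hlogn : Real.log n ≤ Real.log 2 + Real.log r / c - 2 := by
    calc Real.log n ≤ Real.log (2 * x) := Real.log_le_log hnpos hn2x
    _ = Real.log 2 + (Real.log p - 2) := by
        rw [hx, Real.log_mul two_ne_zero (by positivity), Real.log_div (ne_of_gt hp0)
          (Real.exp_ne_zero 2), Real.log_exp]
    _ = Real.log 2 + Real.log r / c - 2 := by
        rw [hp, Real.log_rpow hr0]; ring
  have h1 : c * Real.log n ≤ c * Real.log 2 + Real.log r - 2 * c := by
    have h := mul_le_mul_of_nonneg_left hlogn hc.le
    have heq : c * (Real.log 2 + Real.log r / c - 2) = c * Real.log 2 + Real.log r - 2 * c := by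
      field_simp
    linarith
  have h2 : c * (n:ℝ) * Real.log n ≤ (n:ℝ) * (c * Real.log 2 + Real.log r - 2 * c) := by
    nlinarith [hnpos.le]
  have hlog2 : Real.log 2 < 1 := by
    have := Real.log_two_lt_d9; linarith
  have h3 : c * (2 - Real.log 2) * x ≤ c * (2 - Real.log 2) * (n:ℝ) :=
    mul_le_mul_of_nonneg_left hxn (mul_nonneg hc.le (by linarith))
  have key : c * (2 - Real.log 2) / Real.exp 2 * p ≤ (n:ℝ) * Real.log r - c * n * Real.log n := by
    calc c * (2 - Real.log 2) / Real.exp 2 * p = c * (2 - Real.log 2) * x := by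
          rw [hx]; ring
    _ ≤ c * (2 - Real.log 2) * (n:ℝ) := h3
    _ ≤ (n:ℝ) * Real.log r - c * n * Real.log n := by nlinarith
  have hterm : Real.exp (c * (2 - Real.log 2) / Real.exp 2 * p)
      ≤ Real.exp (-c * n * Real.log n) * r ^ n := by
    rw [term_eq7 c hr0]
    exact Real.exp_le_exp.mpr key
  have hF : Real.exp (c * (2 - Real.log 2) / Real.exp 2 * p)
      ≤ ∑' m : ℕ, Real.exp (-c * m * Real.log m) * r ^ m :=
    hterm.trans (Summable.le_tsum hs n fun m _ => mul_nonneg (Real.exp_pos _).le (pow_nonneg hr0.le m))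
  calc c * (2 - Real.log 2) / Real.exp 2 * p
      = Real.log (Real.exp (c * (2 - Real.log 2) / Real.exp 2 * p)) := (Real.log_exp _).symm
  _ ≤ Real.log (∑' m : ℕ, Real.exp (-c * m * Real.log m) * r ^ m) :=
      Real.log_le_log (Real.exp_pos _) hF



private lemma tsum_upper7 (c : ℝ) (hc : 0 < c) {r : ℝ} (hr : 1 ≤ r) (hL1 : 1 ≤ Real.log r) :
    (∑' n : ℕ, Real.exp (-c * n * Real.log n) * r ^ n)
      ≤ (1 + (1 - Real.exp (-c))⁻¹) *
          ((Real.exp 1 * r ^ (1/c) + 1) *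
            Real.exp ((Real.exp 1 * r ^ (1/c) + 1) * Real.log r)) := by
  have hr0 : (0:ℝ) < r := lt_of_lt_of_le one_pos hr
  have hs := summable7 c hc hr
  have hexplt := exp_neg_lt_one7 hc
  have hC10 : 0 < (1 - Real.exp (-c))⁻¹ := inv_pos.mpr (by linarith)
  have hL0 : (0:ℝ) < Real.log r := lt_of_lt_of_le one_pos hL1
  set p : ℝ := r ^ (1/c) with hp
  have hp0 : 0 < p := Real.rpow_pos_of_pos hr0 _
  have hep : 0 < Real.exp 1 * p := by positivity
  set N : ℕ := ⌈Real.exp 1 * p⌉₊ with hN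
  have hN1 : 1 ≤ N := Nat.ceil_pos.mpr hep
  have hNle : (N:ℝ) ≤ Real.exp 1 * p + 1 := (Nat.ceil_lt_add_one hep.le).le
  have hNge : Real.exp 1 * p ≤ (N:ℝ) := Nat.le_ceil _
  have hfin : ∑ i ∈ Finset.range N, Real.exp (-c * i * Real.log i) * r ^ i
      ≤ (N:ℝ) * Real.exp ((N:ℝ) * Real.log r) := by
    have hbound : ∀ i ∈ Finset.range N,
        Real.exp (-c * i * Real.log i) * r ^ i ≤ Real.exp ((N:ℝ) * Real.log r) := by
      intro i hi
      rw [term_eq7 c hr0]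
      apply Real.exp_le_exp.mpr
      have hiN : (i:ℝ) ≤ N := by exact_mod_cast (Finset.mem_range.mp hi).le
      have hlogi : 0 ≤ Real.log i := by
        rcases Nat.eq_zero_or_pos i with h | h
        · simp [h]
        · exact Real.log_nonneg (by exact_mod_cast h)
      have h1 : (i:ℝ) * Real.log r ≤ (N:ℝ) * Real.log r :=
        mul_le_mul_of_nonneg_right hiN hL0.le
      have h2 : 0 ≤ c * (i:ℝ) * Real.log i :=
        mul_nonneg (mul_nonneg hc.le (Nat.cast_nonneg i)) hlogi
      linarith
    calc ∑ i ∈ Finset.range N, Real.exp (-c * i * Real.log i) * r ^ i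
        ≤ (Finset.range N).card • Real.exp ((N:ℝ) * Real.log r) :=
          Finset.sum_le_card_nsmul _ _ _ hbound
    _ = (N:ℝ) * Real.exp ((N:ℝ) * Real.log r) := by simp [nsmul_eq_mul]
  have hgeo : Summable (fun k : ℕ => Real.exp (-c) ^ k) :=
    summable_geometric_of_lt_one (Real.exp_pos _).le hexplt
  have hstail : Summable (fun k : ℕ =>
      Real.exp (-c * ((k + N : ℕ):ℝ) * Real.log ((k + N : ℕ):ℝ)) * r ^ (k + N)) :=
    (summable_nat_add_iff (f := fun n : ℕ => Real.exp (-c * n * Real.log n) * r ^ n) N).mpr hs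
  have hle : ∀ k : ℕ,
      Real.exp (-c * ((k + N : ℕ):ℝ) * Real.log ((k + N : ℕ):ℝ)) * r ^ (k + N)
        ≤ Real.exp (-c) ^ k := by
    intro k
    rw [term_eq7 c hr0, ← Real.exp_nat_mul]
    apply Real.exp_le_exp.mpr
    have hm : Real.exp 1 * p ≤ ((k + N : ℕ):ℝ) := by
      refine hNge.trans ?_
      exact_mod_cast Nat.le_add_left N k
    have hm0 : (0:ℝ) < ((k + N : ℕ):ℝ) := lt_of_lt_of_le hep hm
    have hlogm : 1 + Real.log r / c ≤ Real.log ((k + N : ℕ):ℝ) := by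
      calc 1 + Real.log r / c = Real.log (Real.exp 1 * p) := by
            rw [Real.log_mul (Real.exp_ne_zero 1) (ne_of_gt hp0), Real.log_exp, hp,
              Real.log_rpow hr0]
            ring
      _ ≤ Real.log ((k + N : ℕ):ℝ) := Real.log_le_log hep hm
    have hcl : c + Real.log r ≤ c * Real.log ((k + N : ℕ):ℝ) := by
      have h := mul_le_mul_of_nonneg_left hlogm hc.le
      have heq : c * (1 + Real.log r / c) = c + Real.log r := by field_simp
      linarith
    have hkm : (k:ℝ) ≤ ((k + N : ℕ):ℝ) := by exact_mod_cast Nat.le_add_right k N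
    nlinarith [mul_le_mul_of_nonneg_left hcl hm0.le, mul_le_mul_of_nonneg_left hkm hc.le]
  have htail : (∑' k : ℕ,
      Real.exp (-c * ((k + N : ℕ):ℝ) * Real.log ((k + N : ℕ):ℝ)) * r ^ (k + N))
      ≤ (1 - Real.exp (-c))⁻¹ := by
    calc (∑' k : ℕ, Real.exp (-c * ((k + N : ℕ):ℝ) * Real.log ((k + N : ℕ):ℝ)) * r ^ (k + N))
        ≤ ∑' k : ℕ, Real.exp (-c) ^ k := Summable.tsum_le_tsum hle hstail hgeo
    _ = (1 - Real.exp (-c))⁻¹ := tsum_geometric_of_lt_one (Real.exp_pos _).le hexplt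
  have hNe : (1:ℝ) ≤ (N:ℝ) * Real.exp ((N:ℝ) * Real.log r) := by
    have h1 : (1:ℝ) ≤ (N:ℝ) := by exact_mod_cast hN1
    have h2 : (1:ℝ) ≤ Real.exp ((N:ℝ) * Real.log r) := Real.one_le_exp (by positivity)
    nlinarith
  have hsplit := (hs.sum_add_tsum_nat_add
    (f := fun n : ℕ => Real.exp (-c * n * Real.log n) * r ^ n) N).symm
  calc (∑' n : ℕ, Real.exp (-c * n * Real.log n) * r ^ n)
      = (∑ i ∈ Finset.range N, Real.exp (-c * i * Real.log i) * r ^ i)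
        + ∑' k : ℕ, Real.exp (-c * ((k + N : ℕ):ℝ) * Real.log ((k + N : ℕ):ℝ)) * r ^ (k + N) :=
        hsplit
  _ ≤ (N:ℝ) * Real.exp ((N:ℝ) * Real.log r) + (1 - Real.exp (-c))⁻¹ := add_le_add hfin htail
  _ ≤ (1 + (1 - Real.exp (-c))⁻¹) * ((N:ℝ) * Real.exp ((N:ℝ) * Real.log r)) := by nlinarith
  _ ≤ (1 + (1 - Real.exp (-c))⁻¹) *
        ((Real.exp 1 * p + 1) * Real.exp ((Real.exp 1 * p + 1) * Real.log r)) := by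
      apply mul_le_mul_of_nonneg_left _ (by positivity)
      apply mul_le_mul hNle (Real.exp_le_exp.mpr (mul_le_mul_of_nonneg_right hNle hL0.le))
        (Real.exp_pos _).le (by positivity)

/-- The entire function `F(r) = ∑_{n=0}^∞ e^(-c n log n) r^n` (with `c > 0`) has
growth order exactly `1/c`: `(log log F(r)) / (log r) → 1/c` as `r → ∞`. -/
theorem stmt_7 (c : ℝ) (hc : 0 < c) :
    Filter.Tendsto
      (fun r : ℝ =>
        Real.log (Real.log (∑' n : ℕ, Real.exp (-c * n * Real.log n) * r ^ n)) /
          Real.log r)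
      Filter.atTop (nhds (1 / c)) := by
  have hexplt := exp_neg_lt_one7 hc
  have hlog2 : Real.log 2 < 1 := by have := Real.log_two_lt_d9; linarith
  set K : ℝ := c * (2 - Real.log 2) / Real.exp 2 with hKdef
  have hK0 : 0 < K := div_pos (mul_pos hc (by linarith)) (Real.exp_pos 2)
  set C1 : ℝ := (1 - Real.exp (-c))⁻¹ with hC1def
  have hC10 : 0 < C1 := inv_pos.mpr (by linarith)
  set C3 : ℝ := 2 * Real.exp 1 + 2 with hC3def
  have hC30 : 0 < C3 := by positivity
  set D : ℝ := Real.log (1 + C1) + Real.log (2 * Real.exp 1) with hDdef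
  have hrpow : Tendsto (fun r : ℝ => r ^ (1/c)) atTop atTop :=
    tendsto_rpow_atTop (by positivity)
  have he1 : (1:ℝ) ≤ Real.exp 1 := Real.one_le_exp one_pos.le
  apply tendsto_of_tendsto_of_tendsto_of_le_of_le'
    (g := fun r : ℝ => Real.log K / Real.log r + 1/c)
    (h := fun r : ℝ => Real.log C3 / Real.log r + 1/c + Real.log (Real.log r) / Real.log r)
  · simpa using (tendsto_const_nhds.div_atTop Real.tendsto_log_atTop).add
      (tendsto_const_nhds (x := 1/c))
  · have h2 : Tendsto (fun r : ℝ => Real.log (Real.log r) / Real.log r) atTop (nhds 0) :=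
      (Real.isLittleO_log_id_atTop.tendsto_div_nhds_zero).comp Real.tendsto_log_atTop
    simpa [Function.comp] using ((tendsto_const_nhds.div_atTop Real.tendsto_log_atTop).add
      (tendsto_const_nhds (x := 1/c))).add h2
  · -- lower bound
    filter_upwards [eventually_ge_atTop (1:ℝ), Real.tendsto_log_atTop.eventually_ge_atTop 1,
      hrpow.eventually_ge_atTop (Real.exp 2), hrpow.eventually_ge_atTop (1/K)]
      with r hr hL1 hp2 hpK
    have hr0 : (0:ℝ) < r := lt_of_lt_of_le one_pos hr
    have hL0 : (0:ℝ) < Real.log r := lt_of_lt_of_le one_pos hL1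
    have hp0 : (0:ℝ) < r ^ (1/c) := Real.rpow_pos_of_pos hr0 _
    have hlow := log_tsum_lower7 c hc hr hp2
    have hKp1 : (1:ℝ) ≤ K * r ^ (1/c) := by
      calc (1:ℝ) = K * (1/K) := by field_simp
      _ ≤ K * r ^ (1/c) := mul_le_mul_of_nonneg_left hpK hK0.le
    have hlogF1 : (1:ℝ) ≤ Real.log (∑' n : ℕ, Real.exp (-c * n * Real.log n) * r ^ n) :=
      hKp1.trans hlow
    have hkey : Real.log K + (1/c) * Real.log r
        ≤ Real.log (Real.log (∑' n : ℕ, Real.exp (-c * n * Real.log n) * r ^ n)) := by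
      calc Real.log K + (1/c) * Real.log r = Real.log (K * r ^ (1/c)) := by
            rw [Real.log_mul (ne_of_gt hK0) (ne_of_gt hp0), Real.log_rpow hr0]
      _ ≤ Real.log (Real.log (∑' n : ℕ, Real.exp (-c * n * Real.log n) * r ^ n)) :=
            Real.log_le_log (by positivity) hlow
    have heq : (Real.log K + 1/c * Real.log r) / Real.log r
        = Real.log K / Real.log r + 1/c := by
      rw [add_div, mul_div_assoc, div_self (ne_of_gt hL0), mul_one]
    rw [← heq]
    exact (div_le_div_iff_of_pos_right hL0).mpr hkey
  · -- upper bound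
    filter_upwards [eventually_ge_atTop (1:ℝ), Real.tendsto_log_atTop.eventually_ge_atTop 1,
      hrpow.eventually_ge_atTop (Real.exp 2), hrpow.eventually_ge_atTop (1/K),
      hrpow.eventually_ge_atTop D, hrpow.eventually_ge_atTop (1/c)]
      with r hr hL1 hp2 hpK hpD hpc
    have hr0 : (0:ℝ) < r := lt_of_lt_of_le one_pos hr
    have hL0 : (0:ℝ) < Real.log r := lt_of_lt_of_le one_pos hL1
    set L : ℝ := Real.log r
    set p : ℝ := r ^ (1/c) with hpdef
    have hp0 : (0:ℝ) < p := Real.rpow_pos_of_pos hr0 _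
    have hp1 : (1:ℝ) ≤ p := Real.one_le_rpow hr (by positivity)
    have hlow := log_tsum_lower7 c hc hr hp2
    have hKp1 : (1:ℝ) ≤ K * p := by
      calc (1:ℝ) = K * (1/K) := by field_simp
      _ ≤ K * p := mul_le_mul_of_nonneg_left hpK hK0.le
    have hF1 : (1:ℝ) ≤ ∑' n : ℕ, Real.exp (-c * n * Real.log n) * r ^ n := by
      have h0 := Summable.le_tsum (summable7 c hc hr) 0
        (fun m _ => mul_nonneg (Real.exp_pos _).le (pow_nonneg hr0.le m))
      calc (1:ℝ) = Real.exp (-c * (0:ℕ) * Real.log (0:ℕ)) * r ^ (0:ℕ) := by norm_num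
      _ ≤ _ := h0
    set F : ℝ := ∑' n : ℕ, Real.exp (-c * n * Real.log n) * r ^ n with hFdef
    have hlogF1 : (1:ℝ) ≤ Real.log F := hKp1.trans hlow
    have hup := tsum_upper7 c hc hr hL1
    have hM2 : Real.exp 1 * p + 1 ≤ 2 * Real.exp 1 * p := by nlinarith
    have hMpos : (0:ℝ) < Real.exp 1 * p + 1 := by positivity
    -- log F ≤ log(1+C1) + log(e p + 1) + (e p + 1) L
    have hlogup : Real.log F ≤ Real.log (1 + C1) + Real.log (Real.exp 1 * p + 1)
        + (Real.exp 1 * p + 1) * L := by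
      calc Real.log F ≤ Real.log ((1 + C1) *
            ((Real.exp 1 * p + 1) * Real.exp ((Real.exp 1 * p + 1) * L))) :=
            Real.log_le_log (by linarith) hup
      _ = Real.log (1 + C1) + Real.log (Real.exp 1 * p + 1) + (Real.exp 1 * p + 1) * L := by
            rw [Real.log_mul (by positivity) (by positivity),
              Real.log_mul (by positivity) (Real.exp_ne_zero _), Real.log_exp]
            ring
    have hlogM : Real.log (Real.exp 1 * p + 1) ≤ Real.log (2 * Real.exp 1) + (1/c) * L := by
      calc Real.log (Real.exp 1 * p + 1) ≤ Real.log (2 * Real.exp 1 * p) :=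
            Real.log_le_log hMpos hM2
      _ = Real.log (2 * Real.exp 1) + (1/c) * L := by
            rw [Real.log_mul (by positivity) (ne_of_gt hp0), hpdef, Real.log_rpow hr0]
    have hfinal : Real.log F ≤ C3 * (p * L) := by
      have h1 : D ≤ p * L := by nlinarith
      have h2 : (1/c) * L ≤ p * L := by nlinarith
      have h3 : (Real.exp 1 * p + 1) * L ≤ 2 * Real.exp 1 * (p * L) := by nlinarith
      rw [hC3def]
      nlinarith [hlogup, hlogM]
    have hkey : Real.log (Real.log F) ≤ Real.log C3 + (1/c) * L + Real.log L := by
      calc Real.log (Real.log F) ≤ Real.log (C3 * (p * L)) :=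
            Real.log_le_log (by linarith) hfinal
      _ = Real.log C3 + (1/c) * L + Real.log L := by
            rw [Real.log_mul (ne_of_gt hC30) (by positivity),
              Real.log_mul (ne_of_gt hp0) (ne_of_gt hL0), hpdef, Real.log_rpow hr0]
            ring
    have heq : (Real.log C3 + 1/c * L + Real.log L) / L
        = Real.log C3 / L + 1/c + Real.log L / L := by
      rw [add_div, add_div, mul_div_assoc, div_self (ne_of_gt hL0), mul_one]
    rw [← heq]
    exact (div_le_div_iff_of_pos_right hL0).mpr hkey
end

section
/- Fix p ≥ 1 and real numbers α_1 < β_1 < α_2 < β_2 < ⋯ < α_p < β_p, set 𝔢 = ⋃_{j=1}^p [α_j, β_j] and r(x) = ∏_{j=1}^p (x − α_j)(x − β_j). Then there exist constants c_1 ∈ ℝ, c_2 > 0 and δ_1 > 0 such that for every δ with 0 < δ < δ_1 and every j ∈ {1,…,p}: ∫_𝔢 √|r(x)|/(x − (α_j − δ))² dx ≥ c_1 + c_2/√δ and ∫_𝔢 √|r(x)|/(x − (β_j + δ))² dx ≥ c_1 + c_2/√δ. -/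
open MeasureTheory

lemma prod_lb (p : ℕ) (α β : Fin p → ℝ) (j : Fin p) (x η t : ℝ)
    (hη : 0 ≤ η) (ht : 0 ≤ t)
    (hj : t * η ≤ |x - α j| * |x - β j|)
    (h1 : ∀ i, i ≠ j → η ≤ |x - α i|) (h2 : ∀ i, i ≠ j → η ≤ |x - β i|) :
    t * η * (η * η) ^ (p - 1) ≤ |∏ i, (x - α i) * (x - β i)| := by
  rw [Finset.abs_prod]
  rw [← Finset.mul_prod_erase Finset.univ _ (Finset.mem_univ j)]
  have hcard : (Finset.univ.erase j).card = p - 1 := by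
    rw [Finset.card_erase_of_mem (Finset.mem_univ j), Finset.card_univ, Fintype.card_fin]
  have h2' : (η * η) ^ (p - 1) ≤ ∏ i ∈ Finset.univ.erase j, |(x - α i) * (x - β i)| := by
    rw [← hcard, ← Finset.prod_const]
    apply Finset.prod_le_prod
    · intro i _; positivity
    · intro i hi
      rw [abs_mul]
      exact mul_le_mul (h1 i (Finset.ne_of_mem_erase hi)) (h2 i (Finset.ne_of_mem_erase hi)) hη
        (abs_nonneg _)
  calc t * η * (η * η) ^ (p - 1) ≤ (|x - α j| * |x - β j|) * ∏ i ∈ Finset.univ.erase j,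
        |(x - α i) * (x - β i)| :=
      mul_le_mul hj h2' (by positivity) (by positivity)
    _ = |(x - α j) * (x - β j)| * ∏ i ∈ Finset.univ.erase j, |(x - α i) * (x - β i)| := by
      rw [abs_mul]

lemma key_int (E : Set ℝ) (hE : MeasurableSet E) (hcomp : IsCompact E) (g : ℝ → ℝ)
    (hg : Continuous g) (hg0 : ∀ x, 0 ≤ g x) (ξ : ℝ) (hξ : ∀ x ∈ E, x ≠ ξ)
    (a b c : ℝ) (hab : a ≤ b) (hsub : Set.Icc a b ⊆ E)
    (hlb : ∀ x ∈ Set.Icc a b, c ≤ g x / (x - ξ) ^ 2) :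
    (b - a) * c ≤ ∫ x in E, g x / (x - ξ) ^ 2 := by
  have hfc : ContinuousOn (fun x => g x / (x - ξ) ^ 2) E :=
    ContinuousOn.div hg.continuousOn (by fun_prop)
      (fun x hx => pow_ne_zero _ (sub_ne_zero.2 (hξ x hx)))
  have hint : IntegrableOn (fun x => g x / (x - ξ) ^ 2) E := hfc.integrableOn_compact hcomp
  have h0 : ∀ x, 0 ≤ g x / (x - ξ) ^ 2 := fun x => div_nonneg (hg0 x) (sq_nonneg _)
  calc (b - a) * c = ∫ _ in Set.Icc a b, c := by
        rw [setIntegral_const]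
        simp [Real.volume_Icc, ENNReal.toReal_ofReal (sub_nonneg.2 hab), smul_eq_mul, hab]
    _ ≤ ∫ x in Set.Icc a b, g x / (x - ξ) ^ 2 := by
        apply setIntegral_mono_on (integrableOn_const measure_Icc_lt_top.ne)
          (hint.mono_set hsub) measurableSet_Icc hlb
    _ ≤ ∫ x in E, g x / (x - ξ) ^ 2 :=
        setIntegral_mono_set hint (ae_of_all _ h0) (HasSubset.Subset.eventuallyLE hsub)

set_option maxHeartbeats 1000000 in
/-- Lower bound `c₁ + c₂/√δ` for the integrals `∫_𝔢 √|r(x)| / (x - (α_j - δ))² dx`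
and `∫_𝔢 √|r(x)| / (x - (β_j + δ))² dx`, uniformly in `j` and small `δ > 0`. -/
theorem stmt_9 (p : ℕ) (hp : 1 ≤ p) (α β : Fin p → ℝ)
    (hαβ : ∀ j, α j < β j)
    (hgap : ∀ j k : Fin p, (j : ℕ) + 1 = (k : ℕ) → β j < α k) :
    ∃ c₁ : ℝ, ∃ c₂ : ℝ, 0 < c₂ ∧ ∃ δ₁ : ℝ, 0 < δ₁ ∧
      ∀ δ : ℝ, 0 < δ → δ < δ₁ → ∀ j : Fin p,
        (c₁ + c₂ / Real.sqrt δ ≤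
            ∫ x in ⋃ i, Set.Icc (α i) (β i),
              Real.sqrt |∏ i, (x - α i) * (x - β i)| / (x - (α j - δ)) ^ 2) ∧
        (c₁ + c₂ / Real.sqrt δ ≤
            ∫ x in ⋃ i, Set.Icc (α i) (β i),
              Real.sqrt |∏ i, (x - α i) * (x - β i)| / (x - (β j + δ)) ^ 2) := by
  have hpn : Nonempty (Fin p) := ⟨⟨0, hp⟩⟩
  -- chain fact: β i < α k whenever i < k
  have hba : ∀ i k : Fin p, (i : ℕ) < (k : ℕ) → β i < α k := by
    have key1 : ∀ n : ℕ, ∀ i k : Fin p, (k : ℕ) = (i : ℕ) + n + 1 → β i < α k := by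
      intro n
      induction n with
      | zero => intro i k h; exact hgap i k (by omega)
      | succ m ih =>
        intro i k h
        have hk' : (i : ℕ) + m + 1 < p := by omega
        set k' : Fin p := ⟨(i : ℕ) + m + 1, hk'⟩
        have h1 : β i < α k' := ih i k' rfl
        have h2 : β k' < α k := hgap k' k (by simp only [k']; omega)
        exact h1.trans ((hαβ k').trans h2)
    intro i k h
    exact key1 ((k : ℕ) - (i : ℕ) - 1) i k (by omega)
  -- minimal gap D
  have hne : (Finset.univ : Finset (Fin p)).Nonempty := Finset.univ_nonempty
  set G : Fin p → ℝ := fun j =>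
    if h : (j : ℕ) + 1 < p then min (β j - α j) (α ⟨(j : ℕ) + 1, h⟩ - β j) else β j - α j
    with hGdef
  set D := Finset.univ.inf' hne G with hDdef
  have hD0 : 0 < D := by
    rw [hDdef, Finset.lt_inf'_iff]
    intro i _
    rw [hGdef]
    dsimp only
    split
    · rename_i h
      exact lt_min (sub_pos.2 (hαβ i)) (sub_pos.2 (hgap i ⟨(i : ℕ) + 1, h⟩ rfl))
    · exact sub_pos.2 (hαβ i)
  have hDβα : ∀ j, D ≤ β j - α j := by
    intro j
    refine le_trans (Finset.inf'_le _ (Finset.mem_univ j)) ?_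
    rw [hGdef]; dsimp only; split
    · exact min_le_left _ _
    · exact le_refl _
  have hDgap : ∀ j : Fin p, ∀ h : (j : ℕ) + 1 < p, D ≤ α ⟨(j : ℕ) + 1, h⟩ - β j := by
    intro j h
    refine le_trans (Finset.inf'_le _ (Finset.mem_univ j)) ?_
    rw [hGdef]; dsimp only
    rw [dif_pos h]
    exact min_le_right _ _
  have hgapD : ∀ i k : Fin p, (i : ℕ) < (k : ℕ) → β i + D ≤ α k := by
    intro i k h
    have hp' : (i : ℕ) + 1 < p := by omega
    by_cases hik : (i : ℕ) + 1 = (k : ℕ)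
    · have h1 := hDgap i hp'
      have h2 : (⟨(i : ℕ) + 1, hp'⟩ : Fin p) = k := Fin.ext hik
      rw [h2] at h1
      linarith
    · set k' : Fin p := ⟨(i : ℕ) + 1, hp'⟩
      have h1 := hDgap i hp'
      have h2 : β k' < α k := hba k' k (by simp only [k']; omega)
      have h3 := hαβ k'
      linarith
  -- constants
  set η : ℝ := D / 2 with hηdef
  have hη0 : 0 < η := by positivity
  set M : ℝ := η * (η * η) ^ (p - 1) with hMdef
  have hM0 : 0 < M := by positivity
  refine ⟨0, Real.sqrt M / 9, by positivity, D / 4, by positivity, ?_⟩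
  intro δ hδ hδ₁ j
  have hsδ : (0 : ℝ) < Real.sqrt δ := Real.sqrt_pos.2 hδ
  have hδη : 2 * δ < η := by rw [hηdef]; linarith
  have hEmeas : MeasurableSet (⋃ i, Set.Icc (α i) (β i)) :=
    MeasurableSet.iUnion fun i => measurableSet_Icc
  have hEcomp : IsCompact (⋃ i, Set.Icc (α i) (β i)) :=
    isCompact_iUnion fun i => isCompact_Icc
  set g : ℝ → ℝ := fun x => Real.sqrt |∏ i, (x - α i) * (x - β i)| with hgdef
  have hgc : Continuous g := by
    apply Real.continuous_sqrt.comp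
    apply continuous_abs.comp
    exact continuous_finset_prod _ fun i _ => by fun_prop
  have hg0 : ∀ x, 0 ≤ g x := fun x => Real.sqrt_nonneg _
  -- lower bound for g on suitable intervals
  have hglb : ∀ x t : ℝ, δ ≤ t → t * η ≤ |x - α j| * |x - β j| →
      (∀ i, i ≠ j → η ≤ |x - α i|) → (∀ i, i ≠ j → η ≤ |x - β i|) →
      Real.sqrt δ * Real.sqrt M ≤ g x := by
    intro x t hδt hj h1 h2
    have hplb := prod_lb p α β j x η t hη0.le (by linarith) hj h1 h2
    have h3 : δ * M ≤ |∏ i, (x - α i) * (x - β i)| := by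
      refine le_trans ?_ hplb
      rw [hMdef]
      have hpw : (0:ℝ) ≤ (η * η) ^ (p - 1) := by positivity
      nlinarith
    calc Real.sqrt δ * Real.sqrt M = Real.sqrt (δ * M) := (Real.sqrt_mul hδ.le M).symm
      _ ≤ g x := Real.sqrt_le_sqrt h3
  -- final arithmetic
  have hfinal : (0 : ℝ) + Real.sqrt M / 9 / Real.sqrt δ
      = (2 * δ - δ) * (Real.sqrt δ * Real.sqrt M / (9 * δ ^ 2)) := by
    have h1 : Real.sqrt δ ≠ 0 := ne_of_gt hsδ
    have h2 : δ ≠ 0 := ne_of_gt hδ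
    have hδeq : Real.sqrt δ * Real.sqrt δ = δ := Real.mul_self_sqrt hδ.le
    rw [zero_add]
    field_simp
    linear_combination -hδeq
  constructor
  · -- α case
    set ξ := α j - δ with hξdef
    have hξE : ∀ x ∈ ⋃ i, Set.Icc (α i) (β i), x ≠ ξ := by
      intro x hx heq
      obtain ⟨i, hi⟩ := Set.mem_iUnion.1 hx
      obtain ⟨hi1, hi2⟩ := hi
      rcases lt_trichotomy ((i : ℕ)) ((j : ℕ)) with h | h | h
      · have := hgapD i j h; rw [hξdef] at heq; linarith [heq ▸ hi2]
      · have : i = j := Fin.ext h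
        subst this
        rw [hξdef] at heq; linarith [heq ▸ hi1]
      · have := hgapD j i h
        have h3 := hαβ j
        rw [hξdef] at heq; linarith [heq ▸ hi1]
    have hsub : Set.Icc (α j + δ) (α j + 2 * δ) ⊆ ⋃ i, Set.Icc (α i) (β i) := by
      refine Set.Subset.trans ?_ (Set.subset_iUnion (fun i => Set.Icc (α i) (β i)) j)
      apply Set.Icc_subset_Icc (by linarith)
      have := hDβα j; linarith
    have hlb : ∀ x ∈ Set.Icc (α j + δ) (α j + 2 * δ),
        Real.sqrt δ * Real.sqrt M / (9 * δ ^ 2) ≤ g x / (x - ξ) ^ 2 := by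
      intro x hx
      obtain ⟨hx1, hx2⟩ := hx
      have hnum : Real.sqrt δ * Real.sqrt M ≤ g x := by
        apply hglb x (x - α j) (by linarith)
        · have e1 : |x - α j| = x - α j := abs_of_nonneg (by linarith)
          have e2 : |x - β j| = β j - x := by
            rw [abs_of_nonpos (by linarith [hDβα j])]; ring
          rw [e1, e2]
          have : η ≤ β j - x := by linarith [hDβα j]
          nlinarith
        · intro i hi
          have hij : (i : ℕ) ≠ (j : ℕ) := fun h => hi (Fin.ext h)
          rcases hij.lt_or_gt with h | h
          · have h1 := hgapD i j h
            have h2 := hαβ i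
            refine le_trans ?_ (le_abs_self _); linarith
          · have h1 := hgapD j i h
            have h2 := hDβα j
            refine le_trans ?_ (neg_le_abs _); linarith
        · intro i hi
          have hij : (i : ℕ) ≠ (j : ℕ) := fun h => hi (Fin.ext h)
          rcases hij.lt_or_gt with h | h
          · have h1 := hgapD i j h
            refine le_trans ?_ (le_abs_self _); linarith
          · have h1 := hgapD j i h
            have h2 := hDβα i
            have h3 := hαβ j
            refine le_trans ?_ (neg_le_abs _); linarith
      have hden1 : (0 : ℝ) < (x - ξ) ^ 2 := by
        rw [hξdef]; nlinarith
      have hden2 : (x - ξ) ^ 2 ≤ 9 * δ ^ 2 := by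
        rw [hξdef]; nlinarith
      exact div_le_div₀ (hg0 x) hnum hden1 hden2
    calc (0 : ℝ) + Real.sqrt M / 9 / Real.sqrt δ
        = ((α j + 2 * δ) - (α j + δ)) * (Real.sqrt δ * Real.sqrt M / (9 * δ ^ 2)) := by
          rw [hfinal]; ring_nf
      _ ≤ _ := key_int _ hEmeas hEcomp g hgc hg0 ξ hξE _ _ _ (by linarith) hsub hlb
  · -- β case
    set ξ := β j + δ with hξdef
    have hξE : ∀ x ∈ ⋃ i, Set.Icc (α i) (β i), x ≠ ξ := by
      intro x hx heq
      obtain ⟨i, hi⟩ := Set.mem_iUnion.1 hx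
      obtain ⟨hi1, hi2⟩ := hi
      rcases lt_trichotomy ((i : ℕ)) ((j : ℕ)) with h | h | h
      · have := hgapD i j h
        have h3 := hαβ j
        rw [hξdef] at heq; linarith [heq ▸ hi2]
      · have : i = j := Fin.ext h
        subst this
        rw [hξdef] at heq; linarith [heq ▸ hi2]
      · have := hgapD j i h
        rw [hξdef] at heq; linarith [heq ▸ hi1]
    have hsub : Set.Icc (β j - 2 * δ) (β j - δ) ⊆ ⋃ i, Set.Icc (α i) (β i) := by
      refine Set.Subset.trans ?_ (Set.subset_iUnion (fun i => Set.Icc (α i) (β i)) j)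
      apply Set.Icc_subset_Icc ?_ (by linarith)
      have := hDβα j; linarith
    have hlb : ∀ x ∈ Set.Icc (β j - 2 * δ) (β j - δ),
        Real.sqrt δ * Real.sqrt M / (9 * δ ^ 2) ≤ g x / (x - ξ) ^ 2 := by
      intro x hx
      obtain ⟨hx1, hx2⟩ := hx
      have hnum : Real.sqrt δ * Real.sqrt M ≤ g x := by
        apply hglb x (β j - x) (by linarith)
        · have e1 : |x - α j| = x - α j := abs_of_nonneg (by linarith [hDβα j])
          have e2 : |x - β j| = β j - x := by
            rw [abs_of_nonpos (by linarith)]; ring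
          rw [e1, e2]
          have : η ≤ x - α j := by linarith [hDβα j]
          nlinarith
        · intro i hi
          have hij : (i : ℕ) ≠ (j : ℕ) := fun h => hi (Fin.ext h)
          rcases hij.lt_or_gt with h | h
          · have h1 := hgapD i j h
            have h2 := hαβ i
            have h3 := hDβα j
            refine le_trans ?_ (le_abs_self _); linarith
          · have h1 := hgapD j i h
            refine le_trans ?_ (neg_le_abs _); linarith
        · intro i hi
          have hij : (i : ℕ) ≠ (j : ℕ) := fun h => hi (Fin.ext h)
          rcases hij.lt_or_gt with h | h
          · have h1 := hgapD i j h
            have h3 := hDβα j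
            refine le_trans ?_ (le_abs_self _); linarith
          · have h1 := hgapD j i h
            have h2 := hDβα i
            refine le_trans ?_ (neg_le_abs _); linarith
      have hden1 : (0 : ℝ) < (x - ξ) ^ 2 := by
        rw [hξdef]; nlinarith
      have hden2 : (x - ξ) ^ 2 ≤ 9 * δ ^ 2 := by
        rw [hξdef]; nlinarith
      exact div_le_div₀ (hg0 x) hnum hden1 hden2
    calc (0 : ℝ) + Real.sqrt M / 9 / Real.sqrt δ
        = ((β j - δ) - (β j - 2 * δ)) * (Real.sqrt δ * Real.sqrt M / (9 * δ ^ 2)) := by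
          rw [hfinal]; ring_nf
      _ ≤ _ := key_int _ hEmeas hEcomp g hgc hg0 ξ hξE _ _ _ (by linarith) hsub hlb
end

section
/- Fix p ≥ 1 and real numbers α_1 < β_1 < α_2 < β_2 < ⋯ < α_p < β_p, set 𝔢 = ⋃_{j=1}^p [α_j, β_j] and r(x) = ∏_{j=1}^p (x − α_j)(x − β_j). Then there exist constants c_1 ∈ ℝ, c_2 > 0 and δ_1 > 0 such that for every δ with 0 < δ < δ_1 and every real x_0 ∈ ⋃_{j=1}^p (α_j − δ, β_j + δ): ∫_𝔢 √|r(x)|/((x − x_0)² + δ²) dx ≥ c_1 + c_2/√δ. -/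
open MeasureTheory Set Real


/-- Lower bound `c₁ + c₂/√δ` for the integrals `∫_𝔢 √|r(x)| /((x - x₀)² + δ²) dx`,
uniformly over `x₀ ∈ ⋃_j (α_j - δ, β_j + δ)` and small `δ > 0`. -/
theorem stmt_10 (p : ℕ) (hp : 1 ≤ p) (α β : Fin p → ℝ)
    (hαβ : ∀ j, α j < β j)
    (hgap : ∀ j k : Fin p, (j : ℕ) + 1 = (k : ℕ) → β j < α k) :
    ∃ c₁ : ℝ, ∃ c₂ : ℝ, 0 < c₂ ∧ ∃ δ₁ : ℝ, 0 < δ₁ ∧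
      ∀ δ : ℝ, 0 < δ → δ < δ₁ →
        ∀ x₀ ∈ ⋃ j, Set.Ioo (α j - δ) (β j + δ),
          c₁ + c₂ / Real.sqrt δ ≤
            ∫ x in ⋃ i, Set.Icc (α i) (β i),
              Real.sqrt |∏ i, (x - α i) * (x - β i)| / ((x - x₀) ^ 2 + δ ^ 2) := by
  classical
  haveI : Nonempty (Fin p) := ⟨⟨0, hp⟩⟩
  -- full ordering of bands
  have chain : ∀ d : ℕ, ∀ j k : Fin p, (j : ℕ) + d + 1 = (k : ℕ) → β j < α k := by
    intro d
    induction d with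
    | zero => intro j k h; exact hgap j k h
    | succ n ih =>
      intro j k h
      have hk : (j : ℕ) + n + 1 < p := by have := k.isLt; omega
      have h1 : β j < α ⟨(j : ℕ) + n + 1, hk⟩ := ih j _ rfl
      have h2 : β ⟨(j : ℕ) + n + 1, hk⟩ < α k := hgap _ k (by simp; omega)
      linarith [hαβ (⟨(j : ℕ) + n + 1, hk⟩ : Fin p)]
  have mono : ∀ j k : Fin p, (j : ℕ) < (k : ℕ) → β j < α k := by
    intro j k h
    exact chain ((k : ℕ) - (j : ℕ) - 1) j k (by omega)
  -- minimum of the other factors on each band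
  have hP : ∀ j : Fin p, ∃ mj : ℝ, 0 < mj ∧ ∀ x ∈ Icc (α j) (β j),
      mj ≤ |∏ i ∈ Finset.univ.erase j, (x - α i) * (x - β i)| := by
    intro j
    have hcont : Continuous fun x : ℝ => |∏ i ∈ Finset.univ.erase j, (x - α i) * (x - β i)| := by
      apply Continuous.abs
      apply continuous_finset_prod
      intro i _
      fun_prop
    obtain ⟨z, hz, hzmin⟩ := isCompact_Icc.exists_isMinOn
      ⟨α j, left_mem_Icc.mpr (hαβ j).le⟩ hcont.continuousOn
    refine ⟨_, ?_, fun x hx => isMinOn_iff.mp hzmin x hx⟩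
    rw [abs_pos]
    rw [Finset.prod_ne_zero_iff]
    intro i hi
    have hij : (i : ℕ) ≠ (j : ℕ) := fun h => (Finset.ne_of_mem_erase hi) (Fin.ext h)
    rcases lt_or_gt_of_ne hij with h | h
    · have h1 := mono i j h
      have h2 := hαβ i
      have hz1 := hz.1
      exact mul_ne_zero (sub_ne_zero.mpr ((by linarith : α i < z).ne'))
        (sub_ne_zero.mpr ((by linarith : β i < z).ne'))
    · have h1 := mono j i h
      have h2 := hαβ i
      have hz2 := hz.2
      exact mul_ne_zero (sub_ne_zero.mpr ((by linarith : z < α i).ne))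
        (sub_ne_zero.mpr ((by linarith : z < β i).ne))
  choose m hm hmle using hP
  set L : ℝ := Finset.univ.inf' Finset.univ_nonempty (fun j => β j - α j) with hLdef
  clear_value L
  have hL : 0 < L := by
    rw [hLdef, Finset.lt_inf'_iff]
    intro j _
    linarith [hαβ j]
  have hLle : ∀ j : Fin p, L ≤ β j - α j := fun j =>
    hLdef ▸ Finset.inf'_le _ (Finset.mem_univ j)
  set c₀ : ℝ := Finset.univ.inf' Finset.univ_nonempty m with hc₀def
  clear_value c₀
  have hc₀ : 0 < c₀ := by
    rw [hc₀def, Finset.lt_inf'_iff]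
    intro j _
    exact hm j
  have hc₀le : ∀ j : Fin p, c₀ ≤ m j := fun j => hc₀def ▸ Finset.inf'_le _ (Finset.mem_univ j)
  set K : ℝ := Real.sqrt (c₀ * (L / 2)) with hKdef
  clear_value K
  have hK : 0 < K := hKdef ▸ Real.sqrt_pos.mpr (by positivity)
  refine ⟨0, 2 * K / 21, by positivity, L / 8, by positivity, ?_⟩
  intro δ hδ hδ1 x₀ hx₀
  rw [Set.mem_iUnion] at hx₀
  obtain ⟨j, hj⟩ := hx₀
  have hLj := hLle j
  have h8 : 8 * δ < L := by linarith
  set t : ℝ := max (α j + 2 * δ) (min x₀ (β j - 2 * δ)) with htdef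
  clear_value t
  have hab : α j + 2 * δ ≤ β j - 2 * δ := by linarith
  have ht1 : α j + 2 * δ ≤ t := htdef ▸ le_max_left _ _
  have ht2 : t ≤ β j - 2 * δ := htdef ▸ max_le hab (min_le_right _ _)
  have htx : |t - x₀| ≤ 3 * δ := by
    have h1 := hj.1
    have h2 := hj.2
    rw [abs_le]
    rcases le_total x₀ (β j - 2 * δ) with h | h
    · rw [htdef, min_eq_left h]
      rcases le_total (α j + 2 * δ) x₀ with h' | h'
      · rw [max_eq_right h']; constructor <;> linarith
      · rw [max_eq_left h']; constructor <;> linarith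
    · rw [htdef, min_eq_right h, max_eq_right hab]
      constructor <;> linarith
  -- the small interval
  set I : Set ℝ := Icc (t - δ) (t + δ) with hIdef
  have hIsub : I ⊆ Icc (α j) (β j) :=
    Set.Icc_subset_Icc (by linarith) (by linarith)
  have hIsubU : I ⊆ ⋃ i, Set.Icc (α i) (β i) :=
    hIsub.trans (Set.subset_iUnion (fun i => Set.Icc (α i) (β i)) j)
  -- the integrand
  set f : ℝ → ℝ := fun x =>
    Real.sqrt |∏ i, (x - α i) * (x - β i)| / ((x - x₀) ^ 2 + δ ^ 2) with hfdef
  have hfc : Continuous f := by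
    apply Continuous.div
    · apply Continuous.sqrt
      apply Continuous.abs
      apply continuous_finset_prod
      intro i _
      fun_prop
    · fun_prop
    · intro x
      positivity
  have hfnonneg : ∀ x, 0 ≤ f x := by
    intro x
    rw [hfdef]
    positivity
  have hKcompact : IsCompact (⋃ i, Set.Icc (α i) (β i)) :=
    isCompact_iUnion fun i => isCompact_Icc
  have hInt : IntegrableOn f (⋃ i, Set.Icc (α i) (β i)) :=
    hfc.continuousOn.integrableOn_compact hKcompact
  set C : ℝ := Real.sqrt (c₀ * (L / 2) * δ) / (21 * δ ^ 2) with hCdef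
  clear_value C
  have hpoint : ∀ x ∈ I, C ≤ f x := by
    intro x hx
    have hx1 : t - δ ≤ x := hx.1
    have hx2 : x ≤ t + δ := hx.2
    have hxa : δ ≤ x - α j := by linarith
    have hxb : δ ≤ β j - x := by linarith
    have hxmem : x ∈ Icc (α j) (β j) := ⟨by linarith, by linarith⟩
    have hprod : c₀ * (L / 2) * δ ≤ |∏ i, (x - α i) * (x - β i)| := by
      rw [← Finset.mul_prod_erase Finset.univ _ (Finset.mem_univ j), abs_mul]
      have h1 : |(x - α j) * (x - β j)| = (x - α j) * (β j - x) := by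
        rw [abs_of_nonpos (by nlinarith)]; ring
      rw [h1]
      have hA : δ * (L / 2) ≤ (x - α j) * (β j - x) := by nlinarith
      have hB : c₀ ≤ |∏ i ∈ Finset.univ.erase j, (x - α i) * (x - β i)| :=
        le_trans (hc₀le j) (hmle j x hxmem)
      nlinarith [mul_le_mul hA hB hc₀.le (by nlinarith : (0:ℝ) ≤ (x - α j) * (β j - x))]
    have hden : (x - x₀) ^ 2 + δ ^ 2 ≤ 21 * δ ^ 2 := by
      have h1 : -(3 * δ) ≤ t - x₀ := (abs_le.mp htx).1
      have h2 : t - x₀ ≤ 3 * δ := (abs_le.mp htx).2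
      have hsq1 : (x - t) ^ 2 ≤ δ ^ 2 := sq_le_sq' (by linarith) (by linarith)
      have hsq2 : (t - x₀) ^ 2 ≤ (3 * δ) ^ 2 := sq_le_sq' (by linarith) (by linarith)
      have key : 2 * (x - t) * (t - x₀) ≤ (x - t) ^ 2 + (t - x₀) ^ 2 := two_mul_le_add_sq _ _
      have expand : (x - x₀) ^ 2 = (x - t) ^ 2 + 2 * (x - t) * (t - x₀) + (t - x₀) ^ 2 := by
        ring
      rw [expand]
      have h9 : (3 * δ) ^ 2 = 9 * δ ^ 2 := by ring
      linarith
    rw [hCdef, hfdef]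
    simp only
    exact div_le_div₀ (Real.sqrt_nonneg _) (Real.sqrt_le_sqrt hprod) (by positivity) hden
  have hIntI : IntegrableOn f I := hInt.mono_set hIsubU
  have step2 : ∫ _ in I, C ≤ ∫ x in I, f x := by
    apply setIntegral_mono_on ((integrableOn_const_iff (by finiteness)).mpr (Or.inr (by
      rw [hIdef, Real.volume_Icc]; exact ENNReal.ofReal_lt_top))) hIntI
      measurableSet_Icc hpoint
  have step1 : ∫ x in I, f x ≤ ∫ x in ⋃ i, Set.Icc (α i) (β i), f x := by
    apply setIntegral_mono_set hInt
    · exact Filter.Eventually.of_forall fun x => hfnonneg x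
    · exact HasSubset.Subset.eventuallyLE hIsubU
  have step3 : (∫ _ in I, C) = 2 * δ * C := by
    rw [setIntegral_const, hIdef, Real.volume_real_Icc, smul_eq_mul,
      max_eq_left (by linarith)]
    ring_nf
  have step4 : 0 + 2 * K / 21 / Real.sqrt δ ≤ 2 * δ * C := by
    rw [zero_add]
    set s : ℝ := Real.sqrt δ with hsdef
    clear_value s
    have hs0 : 0 < s := hsdef ▸ Real.sqrt_pos.mpr hδ
    have hs2 : s * s = δ := hsdef ▸ Real.mul_self_sqrt hδ.le
    have hsq : Real.sqrt (c₀ * (L / 2) * δ) = K * s := by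
      rw [Real.sqrt_mul (by positivity), hKdef, hsdef]
    rw [hCdef, hsq]
    have hδs : δ = s * s := hs2.symm
    have heq : 2 * δ * (K * s / (21 * δ ^ 2)) = 2 * K / 21 / s := by
      rw [hδs]
      field_simp
    rw [heq]
  calc (0:ℝ) + 2 * K / 21 / Real.sqrt δ ≤ 2 * δ * C := step4
    _ = ∫ _ in I, C := step3.symm
    _ ≤ ∫ x in I, f x := step2
    _ ≤ _ := step1
end

section
/- Let L ≥ 1, ε ≥ 0, and let m, m̃ : ℕ → ℝ be sequences satisfying |m_k| ≤ L^k, |m̃_k| ≤ L^k and |m_k − m̃_k| ≤ L^k·ε for all k. Then for every n ≥ 1 the Hankel determinants satisfy |h_n(m) − h_n(m̃)| ≤ n! · n · L^{n(n−1)} · ε. -/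
/-- The `n`-th Hankel determinant of the moment sequence `m`: the determinant of
the `n × n` matrix with `(i,j)`-entry `m (i + j)` (indices `0 ≤ i, j ≤ n-1`). -/
noncomputable def hankelDet (m : ℕ → ℝ) (n : ℕ) : ℝ :=
  Matrix.det (Matrix.of fun i j : Fin n => m ((i : ℕ) + (j : ℕ)))

lemma prod_diff_bound {ι : Type*} [DecidableEq ι] (s : Finset ι) (a b c : ι → ℝ) (ε : ℝ)
    (hε : 0 ≤ ε) (ha : ∀ i ∈ s, |a i| ≤ c i) (hb : ∀ i ∈ s, |b i| ≤ c i)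
    (hab : ∀ i ∈ s, |a i - b i| ≤ c i * ε) :
    |∏ i ∈ s, a i - ∏ i ∈ s, b i| ≤ (s.card : ℝ) * (∏ i ∈ s, c i) * ε := by
  induction s using Finset.induction_on with
  | empty => simp
  | @insert j s hj ih =>
    have hcs : ∀ i ∈ s, 0 ≤ c i := fun i hi => (abs_nonneg _).trans (ha i (Finset.mem_insert_of_mem hi))
    have hcj : 0 ≤ c j := (abs_nonneg _).trans (ha j (Finset.mem_insert_self j s))
    have hPc : 0 ≤ ∏ i ∈ s, c i := Finset.prod_nonneg hcs
    have hPb : |∏ i ∈ s, b i| ≤ ∏ i ∈ s, c i := by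
      rw [Finset.abs_prod]
      exact Finset.prod_le_prod (fun i _ => abs_nonneg _)
        (fun i hi => hb i (Finset.mem_insert_of_mem hi))
    have IH := ih (fun i hi => ha i (Finset.mem_insert_of_mem hi))
      (fun i hi => hb i (Finset.mem_insert_of_mem hi))
      (fun i hi => hab i (Finset.mem_insert_of_mem hi))
    rw [Finset.prod_insert hj, Finset.prod_insert hj, Finset.prod_insert hj,
      Finset.card_insert_of_notMem hj]
    have key : a j * ∏ i ∈ s, a i - b j * ∏ i ∈ s, b i
        = a j * (∏ i ∈ s, a i - ∏ i ∈ s, b i) + (a j - b j) * ∏ i ∈ s, b i := by ring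
    rw [key]
    calc |a j * (∏ i ∈ s, a i - ∏ i ∈ s, b i) + (a j - b j) * ∏ i ∈ s, b i|
        ≤ |a j| * |∏ i ∈ s, a i - ∏ i ∈ s, b i| + |a j - b j| * |∏ i ∈ s, b i| := by
          rw [← abs_mul, ← abs_mul]; exact abs_add_le _ _
      _ ≤ c j * ((s.card : ℝ) * (∏ i ∈ s, c i) * ε) + (c j * ε) * (∏ i ∈ s, c i) := by
          gcongr <;>
            first
              | exact ha j (Finset.mem_insert_self j s)
              | exact hab j (Finset.mem_insert_self j s)
              | positivity
      _ = ((s.card : ℝ) + 1) * (c j * ∏ i ∈ s, c i) * ε := by ring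
      _ = ((s.card + 1 : ℕ) : ℝ) * (c j * ∏ i ∈ s, c i) * ε := by push_cast; ring

/-- If `|m_k| ≤ L^k`, `|m̃_k| ≤ L^k` and `|m_k - m̃_k| ≤ L^k ε` for all `k`, then
for every `n ≥ 1` the Hankel determinants satisfy
`|h_n(m) - h_n(m̃)| ≤ n! · n · L^(n(n-1)) · ε`. -/
theorem stmt_11 (L ε : ℝ) (hL : 1 ≤ L) (hε : 0 ≤ ε) (m mt : ℕ → ℝ)
    (hm : ∀ k, |m k| ≤ L ^ k) (hmt : ∀ k, |mt k| ≤ L ^ k)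
    (hclose : ∀ k, |m k - mt k| ≤ L ^ k * ε) :
    ∀ n : ℕ, 1 ≤ n →
      |hankelDet m n - hankelDet mt n| ≤
        (n.factorial : ℝ) * n * L ^ (n * (n - 1)) * ε := by
  intro n hn
  have hsum : ∀ σ : Equiv.Perm (Fin n),
      (∑ i : Fin n, (((σ i : ℕ)) + (i : ℕ))) = n * (n - 1) := by
    intro σ
    rw [Finset.sum_add_distrib, Equiv.sum_comp σ (fun i : Fin n => (i : ℕ))]
    rw [← two_mul, Fin.sum_univ_eq_sum_range (fun i => i) n, mul_comm,
      Finset.sum_range_id_mul_two]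
  have hterm : ∀ σ : Equiv.Perm (Fin n),
      |(∏ i : Fin n, m ((σ i : ℕ) + (i : ℕ))) - ∏ i : Fin n, mt ((σ i : ℕ) + (i : ℕ))|
        ≤ (n : ℝ) * L ^ (n * (n - 1)) * ε := by
    intro σ
    have := prod_diff_bound (Finset.univ) (fun i : Fin n => m ((σ i : ℕ) + (i : ℕ)))
      (fun i => mt ((σ i : ℕ) + (i : ℕ))) (fun i => L ^ ((σ i : ℕ) + (i : ℕ))) ε hε
      (fun i _ => hm _) (fun i _ => hmt _) (fun i _ => hclose _)
    simpa [Finset.prod_pow_eq_pow_sum, hsum σ, Finset.card_univ] using this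
  unfold hankelDet
  rw [Matrix.det_apply', Matrix.det_apply', ← Finset.sum_sub_distrib]
  calc |∑ σ : Equiv.Perm (Fin n), (((Equiv.Perm.sign σ : ℤ) : ℝ) * ∏ i, (Matrix.of fun i j : Fin n => m ((i:ℕ)+(j:ℕ))) (σ i) i
          - ((Equiv.Perm.sign σ : ℤ) : ℝ) * ∏ i, (Matrix.of fun i j : Fin n => mt ((i:ℕ)+(j:ℕ))) (σ i) i)|
      ≤ ∑ σ : Equiv.Perm (Fin n), (n : ℝ) * L ^ (n * (n - 1)) * ε := by
        refine (Finset.abs_sum_le_sum_abs _ _).trans (Finset.sum_le_sum fun σ _ => ?_)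
        rw [← mul_sub, abs_mul]
        have hs : |((Equiv.Perm.sign σ : ℤ) : ℝ)| = 1 := by
          rcases Int.units_eq_one_or (Equiv.Perm.sign σ) with h | h <;> simp [h]
        rw [hs, one_mul]
        simpa using hterm σ
    _ = (n.factorial : ℝ) * n * L ^ (n * (n - 1)) * ε := by
        rw [Finset.sum_const, Finset.card_univ, Fintype.card_perm, Fintype.card_fin,
          nsmul_eq_mul]
        ring
end

section
/- Let L ≥ 1, ε ≥ 0, and let m, m̃ : ℕ → ℝ be sequences satisfying |m_k| ≤ L^k, |m̃_k| ≤ L^k and |m_k − m̃_k| ≤ L^k·ε for all k. Then for every n ≥ 1 the shifted Hankel determinants satisfy |g_n(m) − g_n(m̃)| ≤ n! · n · L^{n(n−1)+1} · ε. -/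
/-- The shifted Hankel determinant `g_n(m)`: the determinant of the `n × n`
matrix with `(i,j)`-entry `m (i + j)` for `j ≤ n - 2` and `m (i + n)` in the last
column `j = n - 1`. -/
noncomputable def shiftedHankelDet (m : ℕ → ℝ) (n : ℕ) : ℝ :=
  Matrix.det (Matrix.of fun i j : Fin n =>
    if (j : ℕ) = n - 1 then m ((i : ℕ) + n) else m ((i : ℕ) + (j : ℕ)))

lemma prod_sub_prod_abs_le {ι : Type*} (ε : ℝ) (hε : 0 ≤ ε) (s : Finset ι) (a b c : ι → ℝ)
    (ha : ∀ i ∈ s, |a i| ≤ c i) (hb : ∀ i ∈ s, |b i| ≤ c i)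
    (hab : ∀ i ∈ s, |a i - b i| ≤ c i * ε) :
    |∏ i ∈ s, a i - ∏ i ∈ s, b i| ≤ s.card * (∏ i ∈ s, c i) * ε := by
  classical
  induction s using Finset.induction_on with
  | empty => simp
  | @insert x s hx ih =>
    have hax := ha x (Finset.mem_insert_self x s)
    have habx := hab x (Finset.mem_insert_self x s)
    have ha' : ∀ i ∈ s, |a i| ≤ c i := fun i hi => ha i (Finset.mem_insert_of_mem hi)
    have hb' : ∀ i ∈ s, |b i| ≤ c i := fun i hi => hb i (Finset.mem_insert_of_mem hi)
    have hab' : ∀ i ∈ s, |a i - b i| ≤ c i * ε := fun i hi => hab i (Finset.mem_insert_of_mem hi)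
    have IH := ih ha' hb' hab'
    have hcx : 0 ≤ c x := le_trans (abs_nonneg _) hax
    have hc : ∀ i ∈ s, 0 ≤ c i := fun i hi => le_trans (abs_nonneg _) (hb' i hi)
    have hQ : |∏ i ∈ s, b i| ≤ ∏ i ∈ s, c i := by
      rw [Finset.abs_prod]
      exact Finset.prod_le_prod (fun i _ => abs_nonneg _) hb'
    have hpc : 0 ≤ ∏ i ∈ s, c i := Finset.prod_nonneg hc
    rw [Finset.prod_insert hx, Finset.prod_insert hx, Finset.prod_insert hx,
      Finset.card_insert_of_notMem hx]
    have key : a x * ∏ i ∈ s, a i - b x * ∏ i ∈ s, b i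
        = a x * (∏ i ∈ s, a i - ∏ i ∈ s, b i) + (a x - b x) * ∏ i ∈ s, b i := by ring
    rw [key]
    calc |a x * (∏ i ∈ s, a i - ∏ i ∈ s, b i) + (a x - b x) * ∏ i ∈ s, b i|
        ≤ |a x| * |∏ i ∈ s, a i - ∏ i ∈ s, b i| + |a x - b x| * |∏ i ∈ s, b i| := by
          rw [← abs_mul, ← abs_mul]; exact abs_add_le _ _
      _ ≤ c x * (s.card * (∏ i ∈ s, c i) * ε) + (c x * ε) * (∏ i ∈ s, c i) := by
          gcongr
      _ = (↑(s.card + 1) : ℝ) * (c x * ∏ i ∈ s, c i) * ε := by push_cast; ring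

/-- If `|m_k| ≤ L^k`, `|m̃_k| ≤ L^k` and `|m_k - m̃_k| ≤ L^k ε` for all `k`, then
for every `n ≥ 1` the shifted Hankel determinants satisfy
`|g_n(m) - g_n(m̃)| ≤ n! · n · L^(n(n-1)+1) · ε`. -/
theorem stmt_12 (L ε : ℝ) (hL : 1 ≤ L) (hε : 0 ≤ ε) (m mt : ℕ → ℝ)
    (hm : ∀ k, |m k| ≤ L ^ k) (hmt : ∀ k, |mt k| ≤ L ^ k)
    (hclose : ∀ k, |m k - mt k| ≤ L ^ k * ε) :
    ∀ n : ℕ, 1 ≤ n →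
      |shiftedHankelDet m n - shiftedHankelDet mt n| ≤
        (n.factorial : ℝ) * n * L ^ (n * (n - 1) + 1) * ε := by
  intro n hn
  set g : Fin n → ℕ := fun j => (j : ℕ) + (if (j : ℕ) = n - 1 then 1 else 0) with hg
  have hentry : ∀ (f : ℕ → ℝ) (i j : Fin n),
      (if (j : ℕ) = n - 1 then f ((i : ℕ) + n) else f ((i : ℕ) + (j : ℕ)))
        = f ((i : ℕ) + g j) := by
    intro f i j
    simp only [hg]
    split_ifs with h
    · rw [h]; congr 1; omega
    · simp
  -- sum of the exponents
  have hind : ∑ j : Fin n, (if (j : ℕ) = n - 1 then 1 else 0) = 1 := by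
    have hj0 : n - 1 < n := by omega
    rw [Finset.sum_eq_single (⟨n - 1, hj0⟩ : Fin n)]
    · simp
    · intro b _ hb
      have : (b : ℕ) ≠ n - 1 := fun h => hb (Fin.ext h)
      simp [this]
    · simp
  have hsv : (∑ i : Fin n, (i : ℕ)) * 2 = n * (n - 1) := by
    rw [Fin.sum_univ_eq_sum_range (fun i => i) n]
    exact Finset.sum_range_id_mul_two n
  have hE : ∀ σ : Equiv.Perm (Fin n),
      ∑ i : Fin n, ((σ i : ℕ) + g i) = n * (n - 1) + 1 := by
    intro σ
    rw [Finset.sum_add_distrib]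
    have h1 : ∑ i : Fin n, (σ i : ℕ) = ∑ i : Fin n, (i : ℕ) :=
      Equiv.sum_comp σ (fun i => (i : ℕ))
    have h2 : ∑ i : Fin n, g i = (∑ i : Fin n, (i : ℕ)) + 1 := by
      simp only [hg, Finset.sum_add_distrib, hind]
    omega
  -- expand determinants
  unfold shiftedHankelDet
  rw [Matrix.det_apply', Matrix.det_apply']
  simp only [Matrix.of_apply]
  simp_rw [hentry]
  rw [← Finset.sum_sub_distrib]
  have bound : ∀ σ : Equiv.Perm (Fin n),
      |((Equiv.Perm.sign σ : ℤ) : ℝ) * ∏ i : Fin n, m ((σ i : ℕ) + g i)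
        - ((Equiv.Perm.sign σ : ℤ) : ℝ) * ∏ i : Fin n, mt ((σ i : ℕ) + g i)|
        ≤ n * L ^ (n * (n - 1) + 1) * ε := by
    intro σ
    have hsgn : |((Equiv.Perm.sign σ : ℤ) : ℝ)| = 1 := by
      rcases Int.units_eq_one_or (Equiv.Perm.sign σ) with h | h <;> simp [h]
    rw [← mul_sub, abs_mul, hsgn, one_mul]
    have := prod_sub_prod_abs_le ε hε Finset.univ
      (fun i => m ((σ i : ℕ) + g i)) (fun i => mt ((σ i : ℕ) + g i))
      (fun i => L ^ ((σ i : ℕ) + g i))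
      (fun i _ => hm _) (fun i _ => hmt _) (fun i _ => hclose _)
    rw [Finset.prod_pow_eq_pow_sum, hE σ] at this
    simpa using this
  calc |∑ σ : Equiv.Perm (Fin n),
        (((Equiv.Perm.sign σ : ℤ) : ℝ) * ∏ i : Fin n, m ((σ i : ℕ) + g i)
          - ((Equiv.Perm.sign σ : ℤ) : ℝ) * ∏ i : Fin n, mt ((σ i : ℕ) + g i))|
      ≤ ∑ σ : Equiv.Perm (Fin n), (n * L ^ (n * (n - 1) + 1) * ε : ℝ) :=
        le_trans (Finset.abs_sum_le_sum_abs _ _) (Finset.sum_le_sum fun σ _ => bound σ)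
    _ = (n.factorial : ℝ) * n * L ^ (n * (n - 1) + 1) * ε := by
        rw [Finset.sum_const, Finset.card_univ, Fintype.card_perm, Fintype.card_fin]
        simp [mul_assoc]
end

section
/- Let a < b ≤ E be real numbers and let f : ℝ → ℝ be analytic on an open set U containing the closed interval [a, E]. Suppose that f(x) > 0 for all x in the open interval (a, b), that f(E) = 0 with f′(E) ≠ 0, and that the zeros of f in [b, E), counted with their analytic multiplicities, are finite in number with even total count. Then f′(E) < 0. -/
/-- If `f` is real-analytic on an open set containing `[a, E]`, positive on the
band `(a, b)`, has a simple zero at `E` (`f E = 0`, `f' E ≠ 0`), and the zeros of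
`f` in `[b, E)` counted with their analytic multiplicities are finite in number
with even total count, then `f' E < 0`. -/
theorem stmt_15 (a b E : ℝ) (hab : a < b) (hbE : b ≤ E)
    (U : Set ℝ) (hU : IsOpen U) (hIU : Set.Icc a E ⊆ U)
    (f : ℝ → ℝ) (hf : AnalyticOnNhd ℝ f U)
    (hpos : ∀ x ∈ Set.Ioo a b, 0 < f x)
    (hfE : f E = 0) (hfE' : deriv f E ≠ 0)
    (Z : Finset ℝ) (hZ : ∀ x : ℝ, x ∈ Z ↔ x ∈ Set.Ico b E ∧ f x = 0)
    (mult : ℝ → ℕ)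
    (hmult : ∀ x ∈ Z, 1 ≤ mult x ∧
      ∃ g : ℝ → ℝ, AnalyticAt ℝ g x ∧ g x ≠ 0 ∧
        ∀ᶠ y in nhds x, f y = (y - x) ^ mult x * g y)
    (heven : Even (∑ x ∈ Z, mult x)) :
    deriv f E < 0 := by
  classical
  have haE : a < E := lt_of_lt_of_le hab hbE
  have hIooU : Set.Ioo a E ⊆ U := fun x hx => hIU ⟨hx.1.le, hx.2.le⟩
  have hZsub : ∀ z ∈ Z, z ∈ Set.Ioo a E := by
    intro z hz
    rcases (hZ z).mp hz with ⟨⟨h1, h2⟩, _⟩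
    exact ⟨lt_of_lt_of_le hab h1, h2⟩
  have hch : ∀ z, z ∈ Z → ∃ g : ℝ → ℝ, AnalyticAt ℝ g z ∧ g z ≠ 0 ∧
      ∀ᶠ y in nhds z, f y = (y - z) ^ mult z * g y := fun z hz => (hmult z hz).2
  choose! g hg1 hg2 hg3 using hch
  set P : ℝ → ℝ := fun x => ∏ w ∈ Z, (x - w) ^ mult w with hPdef
  have hPcont : Continuous P := by
    apply continuous_finset_prod
    intro w _
    exact (continuous_id.sub continuous_const).pow _
  have hPne : ∀ x, x ∉ Z → P x ≠ 0 := by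
    intro x hx
    apply Finset.prod_ne_zero_iff.mpr
    intro w hw
    exact pow_ne_zero _ (sub_ne_zero.mpr (fun h => hx (h ▸ hw)))
  set h : ℝ → ℝ := fun x =>
    if x ∈ Z then g x x / ∏ w ∈ Z.erase x, (x - w) ^ mult w else f x / P x with hhdef
  -- continuity of h on Ioo a E
  have hcont : ∀ x ∈ Set.Ioo a E, ContinuousAt h x := by
    intro x hx
    by_cases hxZ : x ∈ Z
    · -- near a zero z = x
      set Q : ℝ → ℝ := fun y => ∏ w ∈ Z.erase x, (y - w) ^ mult w with hQdef
      have hQcont : Continuous Q := by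
        apply continuous_finset_prod
        intro w _
        exact (continuous_id.sub continuous_const).pow _
      have hQne : Q x ≠ 0 := by
        apply Finset.prod_ne_zero_iff.mpr
        intro w hw
        exact pow_ne_zero _ (sub_ne_zero.mpr (Finset.ne_of_mem_erase hw).symm)
      have hcgQ : ContinuousAt (fun y => g x y / Q y) x :=
        ((hg1 x hxZ).continuousAt).div hQcont.continuousAt hQne
      apply hcgQ.congr
      have hopen : {y : ℝ | y ∉ (Z.erase x : Finset ℝ)} ∈ nhds x := by
        apply IsOpen.mem_nhds
        · exact (Set.Finite.isClosed (Z.erase x).finite_toSet).isOpen_compl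
        · exact Finset.notMem_erase x Z
      filter_upwards [hopen, hg3 x hxZ] with y hy hfy
      by_cases hyx : y = x
      · subst hyx
        simp only [hhdef, if_pos hxZ, hQdef]
      · have hyZ : y ∉ Z := by
          intro hyZ
          exact hy (Finset.mem_erase.mpr ⟨hyx, hyZ⟩)
        have hPy : P y = (y - x) ^ mult x * Q y := by
          simp only [hPdef, hQdef]
          exact (Finset.mul_prod_erase Z _ hxZ).symm
        have hne : (y - x) ^ mult x ≠ 0 := pow_ne_zero _ (sub_ne_zero.mpr hyx)
        simp only [hhdef, if_neg hyZ, hfy, hPy]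
        rw [mul_div_mul_left _ _ hne]
    · -- x not a zero
      have hcfP : ContinuousAt (fun y => f y / P y) x :=
        ((hf x (hIooU hx)).continuousAt).div hPcont.continuousAt (hPne x hxZ)
      apply hcfP.congr
      have hopen : {y : ℝ | y ∉ (Z : Finset ℝ)} ∈ nhds x := by
        apply IsOpen.mem_nhds
        · exact (Set.Finite.isClosed Z.finite_toSet).isOpen_compl
        · exact hxZ
      filter_upwards [hopen] with y hy
      simp only [hhdef, if_neg hy]
  -- h nonvanishing on Ioo a E
  have hne : ∀ x ∈ Set.Ioo a E, h x ≠ 0 := by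
    intro x hx
    by_cases hxZ : x ∈ Z
    · have hQne : (∏ w ∈ Z.erase x, (x - w) ^ mult w) ≠ 0 := by
        apply Finset.prod_ne_zero_iff.mpr
        intro w hw
        exact pow_ne_zero _ (sub_ne_zero.mpr ((Finset.ne_of_mem_erase hw).symm))
      simp only [hhdef, if_pos hxZ]
      exact div_ne_zero (hg2 x hxZ) hQne
    · have hfx : f x ≠ 0 := by
        rcases lt_or_ge x b with hxb | hbx
        · exact (hpos x ⟨hx.1, hxb⟩).ne'
        · intro hfx0
          exact hxZ ((hZ x).mpr ⟨⟨hbx, hx.2⟩, hfx0⟩)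
      simp only [hhdef, if_neg hxZ]
      exact div_ne_zero hfx (hPne x hxZ)
  -- base point
  set x0 : ℝ := (a + b) / 2 with hx0def
  have hx0ab : x0 ∈ Set.Ioo a b := ⟨by linarith, by linarith⟩
  have hx0aE : x0 ∈ Set.Ioo a E := ⟨hx0ab.1, lt_of_lt_of_le hx0ab.2 hbE⟩
  have hx0Z : x0 ∉ Z := by
    intro hx0Z
    exact absurd ((hZ x0).mp hx0Z).1.1 (not_le.mpr hx0ab.2)
  have hPx0 : 0 < P x0 := by
    have : P x0 = ∏ w ∈ Z, (-1 : ℝ) ^ mult w * (w - x0) ^ mult w := by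
      apply Finset.prod_congr rfl
      intro w _
      rw [← mul_pow]
      norm_num
    rw [this, Finset.prod_mul_distrib, Finset.prod_pow_eq_pow_sum,
      heven.neg_one_pow, one_mul]
    apply Finset.prod_pos
    intro w hw
    have : x0 < w := lt_of_lt_of_le hx0ab.2 ((hZ w).mp hw).1.1
    exact pow_pos (by linarith) _
  have hhx0 : 0 < h x0 := by
    simp only [hhdef, if_neg hx0Z]
    exact div_pos (hpos x0 hx0ab) hPx0
  -- sign constancy of h on Ioo a E
  have hsign : ∀ x ∈ Set.Ioo a E, 0 < h x := by
    intro x hx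
    by_contra hxle
    have hxneg : h x < 0 := lt_of_le_of_ne (not_lt.mp hxle) (hne x hx)
    have hsub : Set.uIcc x0 x ⊆ Set.Ioo a E :=
      Set.OrdConnected.uIcc_subset Set.ordConnected_Ioo hx0aE hx
    have hcontOn : ContinuousOn h (Set.uIcc x0 x) :=
      fun y hy => (hcont y (hsub hy)).continuousWithinAt
    have : (0 : ℝ) ∈ Set.uIcc (h x0) (h x) := by
      rw [Set.mem_uIcc]
      right
      exact ⟨hxneg.le, hhx0.le⟩
    rcases intermediate_value_uIcc hcontOn this with ⟨y, hy, hy0⟩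
    exact hne y (hsub hy) hy0
  -- f positive near E from the left
  have hfpos : ∀ᶠ x in nhdsWithin E (Set.Iio E), 0 < f x ∧ x < E := by
    have e1 : ∀ᶠ x in nhdsWithin E (Set.Iio E), x ∈ Set.Ioo a E :=
      Ioo_mem_nhdsLT_of_mem ⟨haE, le_refl E⟩
    have e2 : ∀ᶠ x in nhdsWithin E (Set.Iio E), ∀ z ∈ Z, z < x := by
      rw [Filter.eventually_all_finset]
      intro z hz
      have hzE : z < E := ((hZ z).mp hz).1.2
      filter_upwards [Ioo_mem_nhdsLT_of_mem (Set.mem_Ioc.mpr ⟨hzE, le_refl E⟩)]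
        with x hx using hx.1
    filter_upwards [e1, e2] with x hx1 hx2
    refine ⟨?_, hx1.2⟩
    have hxZ : x ∉ Z := fun hxZ => lt_irrefl x (hx2 x hxZ)
    have hPx : 0 < P x := by
      apply Finset.prod_pos
      intro w hw
      exact pow_pos (sub_pos.mpr (hx2 w hw)) _
    have hhx : 0 < h x := hsign x hx1
    rw [hhdef] at hhx
    simp only [if_neg hxZ] at hhx
    have := mul_pos hhx hPx
    rwa [div_mul_cancel₀ _ hPx.ne'] at this
  -- derivative bound
  have hfd : HasDerivAt f (deriv f E) E :=
    ((hf E (hIU ⟨haE.le, le_refl E⟩)).differentiableAt).hasDerivAt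
  have hslope := hasDerivAt_iff_tendsto_slope.mp hfd
  have h2 : Filter.Tendsto (slope f E) (nhdsWithin E (Set.Iio E)) (nhds (deriv f E)) :=
    hslope.mono_left (nhdsWithin_mono E (fun x hx => ne_of_lt hx))
  have hle : deriv f E ≤ 0 := by
    apply le_of_tendsto h2
    filter_upwards [hfpos] with x hx
    rw [slope_def_field]
    rw [hfE, sub_zero]
    apply le_of_lt
    exact div_neg_of_pos_of_neg hx.1 (sub_neg.mpr hx.2)
  exact lt_of_le_of_ne hle hfE'
end
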